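/- arXiv:1903.05515 — 4 statements merged into one kernel-verified Lean document; each statement's English description precedes it below -/
import Mathlib

section
/- If M is an infinite strongly minimal right R-module, then for every nonzero r ∈ R the following are equivalent: ann_M(r) is finite; M.r ≠ 0; M.r = M. -/
open FirstOrder Language Set

universe u v w x y

/-! ## Skew polynomial rings `K[t;φ]` -/

/-- `(R, ι, t)` realizes the skew polynomial ring `K[t;φ]` : the commutation rule
`a·t = t·a^φ` holds, and every element of `R` is uniquely a finite sum `∑ tⁱ·aᵢ`
with right-hand coefficients `aᵢ ∈ K`. -/
structure IsSkewPolyRing (K : Type u) [Field K] (φ : K →+* K) (R : Type v) [Ring R]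
    (ι : K →+* R) (t : R) : Prop where
  commute_rule : ∀ a : K, ι a * t = t * ι (φ a)
  unique_rep : ∀ r : R, ∃! c : ℕ →₀ K, r = c.sum fun i a => t ^ i * ι a

/-- Right scalar multiplication of a right `R`-module (i.e. a module over `Rᵐᵒᵖ`). -/
abbrev rsmul {R : Type v} [Ring R] {M : Type w} [AddCommGroup M] [Module Rᵐᵒᵖ M]
    (x : M) (r : R) : M :=
  MulOpposite.op r • x

/-- The set `M.r` is everything, i.e. `x ↦ x.r` is surjective, for every nonzero `r`:
`M` is a divisible right `R`-module. -/
def RDivisible (R : Type v) [Ring R] (M : Type w) [AddCommGroup M] [Module Rᵐᵒᵖ M] : Prop :=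
  ∀ r : R, r ≠ 0 → ∀ y : M, ∃ x : M, rsmul x r = y

/-- A subset `N` of `M` is divisible: `N.r = N` for every nonzero `r ∈ R`. -/
def RDivisibleIn (R : Type v) [Ring R] {M : Type w} [AddCommGroup M] [Module Rᵐᵒᵖ M]
    (N : Set M) : Prop :=
  ∀ r : R, r ≠ 0 → ∀ y ∈ N, ∃ x ∈ N, rsmul x r = y

/-- The torsion subset of a right `R`-module. -/
def torsionSet (R : Type v) [Ring R] (M : Type w) [AddCommGroup M] [Module Rᵐᵒᵖ M] :
    Set M :=
  {z : M | ∃ r : R, r ≠ 0 ∧ rsmul z r = 0}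

/-- `s ∈ R` is separable if it is not divisible by `t`. -/
def SeparablePoly {R : Type v} [Ring R] (t s : R) : Prop :=
  ¬ ∃ q : R, s = t * q

/-- `M = A ⊕ B` as an internal direct sum of subsets. -/
def IsInternalDirectSum {M : Type w} [AddCommGroup M] (A B : Set M) : Prop :=
  ∀ x : M, ∃! p : M × M, p.1 ∈ A ∧ p.2 ∈ B ∧ x = p.1 + p.2

/-- The quotient `R/rR` is a (skew) field: `rR` is a proper two-sided ideal and every
element not in `rR` is invertible modulo `rR`. -/
def QuotByIsDivisionRing (R : Type v) [Ring R] (r : R) : Prop :=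
  (¬ ∃ s : R, 1 = r * s) ∧
  (∀ a s : R, ∃ s' : R, a * (r * s) = r * s') ∧
  (∀ q : R, (¬ ∃ s : R, q = r * s) →
    ∃ q' : R, (∃ s : R, q * q' - 1 = r * s) ∧ (∃ s : R, q' * q - 1 = r * s))

/-! ## Languages -/

/-- The language of right `R`-modules: constant `0`, unary `-` and `·r` (`r ∈ R`),
binary `+`. -/
def modLang (R : Type v) : FirstOrder.Language.{v, 0} :=
  ⟨fun n => match n with
    | 0 => PUnit
    | 1 => Option R
    | 2 => PUnit
    | _ => PEmpty,
   fun _ => PEmpty⟩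

/-- The language of right `R`-modules together with a ternary relation symbol `C`. -/
def cModLang (R : Type v) : FirstOrder.Language.{v, 0} :=
  ⟨(modLang R).Functions,
   fun n => match n with
    | 3 => PUnit
    | _ => PEmpty⟩

/-- The pure language of a `C`-relation: a single ternary relation symbol. -/
def cLang : FirstOrder.Language.{0, 0} :=
  ⟨fun _ => PEmpty,
   fun n => match n with
    | 3 => PUnit
    | _ => PEmpty⟩

/-- The language `L_V = {<, ∞, (·r)_{r ∈ R}}` of `R`-chains. -/
def chainLang (R : Type v) : FirstOrder.Language.{v, 0} :=
  ⟨fun n => match n with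
    | 0 => PUnit
    | 1 => R
    | _ => PEmpty,
   fun n => match n with
    | 2 => PUnit
    | _ => PEmpty⟩

/-- The language `L'_V = L_V ∪ {Rₙ : n ∈ ℕ}` with additional unary predicates `Rₙ`. -/
def chainLang' (R : Type v) : FirstOrder.Language.{v, 0} :=
  ⟨(chainLang R).Functions,
   fun n => match n with
    | 1 => ℕ
    | 2 => PUnit
    | _ => PEmpty⟩

/-! ## Structures -/

/-- Any right `R`-module is a `modLang R`-structure. -/
instance modStructure (R : Type v) [Ring R] (M : Type w) [AddCommGroup M]
    [Module Rᵐᵒᵖ M] : (modLang R).Structure M where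
  funMap {n} f x :=
    match n, f, x with
    | 0, _, _ => 0
    | 1, none, x => -x 0
    | 1, some r, x => rsmul (x 0) r
    | 2, _, x => x 0 + x 1
    | _ + 3, f, _ => PEmpty.elim f
  RelMap {_} r _ := PEmpty.elim r

/-- A subset of `M` closed under the module operations. -/
structure SubmoduleSet (R : Type v) [Ring R] (M : Type w) [AddCommGroup M]
    [Module Rᵐᵒᵖ M] (N : Set M) : Prop where
  zero_mem : (0 : M) ∈ N
  add_mem : ∀ x y : M, x ∈ N → y ∈ N → x + y ∈ N
  neg_mem : ∀ x : M, x ∈ N → -x ∈ N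
  smul_mem : ∀ (r : R) (x : M), x ∈ N → rsmul x r ∈ N

/-- The `modLang R`-structure on a subset closed under the module operations. -/
def setModStructure (R : Type v) [Ring R] (M : Type w) [AddCommGroup M] [Module Rᵐᵒᵖ M]
    (N : Set M) (h : SubmoduleSet R M N) : (modLang R).Structure N where
  funMap {n} f x :=
    match n, f, x with
    | 0, _, _ => ⟨0, h.zero_mem⟩
    | 1, none, x => ⟨-(x 0 : M), h.neg_mem _ (x 0).2⟩
    | 1, some r, x => ⟨rsmul (x 0 : M) r, h.smul_mem r _ (x 0).2⟩
    | 2, _, x => ⟨(x 0 : M) + (x 1 : M), h.add_mem _ _ (x 0).2 (x 1).2⟩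
    | _ + 3, f, _ => PEmpty.elim f
  RelMap {_} r _ := PEmpty.elim r

/-- The `cModLang R`-structure on a right `R`-module endowed with a ternary relation `C`. -/
def cModStructure (R : Type v) [Ring R] (M : Type w) [AddCommGroup M] [Module Rᵐᵒᵖ M]
    (C : M → M → M → Prop) : (cModLang R).Structure M where
  funMap {n} f x :=
    match n, f, x with
    | 0, _, _ => 0
    | 1, none, x => -x 0
    | 1, some r, x => rsmul (x 0) r
    | 2, _, x => x 0 + x 1
    | _ + 3, f, _ => PEmpty.elim f
  RelMap {n} r x :=
    match n, r, x with
    | 3, _, x => C (x 0) (x 1) (x 2)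
    | 0, r, _ => PEmpty.elim r
    | 1, r, _ => PEmpty.elim r
    | 2, r, _ => PEmpty.elim r
    | _ + 4, r, _ => PEmpty.elim r

/-- The `cModLang R`-structure on a subset closed under the module operations, with a
ternary relation `C` restricted from the ambient module. -/
def cModStructureSet (R : Type v) [Ring R] (M : Type w) [AddCommGroup M] [Module Rᵐᵒᵖ M]
    (N : Set M) (h : SubmoduleSet R M N) (C : M → M → M → Prop) :
    (cModLang R).Structure N where
  funMap {n} f x :=
    match n, f, x with
    | 0, _, _ => ⟨0, h.zero_mem⟩
    | 1, none, x => ⟨-(x 0 : M), h.neg_mem _ (x 0).2⟩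
    | 1, some r, x => ⟨rsmul (x 0 : M) r, h.smul_mem r _ (x 0).2⟩
    | 2, _, x => ⟨(x 0 : M) + (x 1 : M), h.add_mem _ _ (x 0).2 (x 1).2⟩
    | _ + 3, f, _ => PEmpty.elim f
  RelMap {n} r x :=
    match n, r, x with
    | 3, _, x => C (x 0) (x 1) (x 2)
    | 0, r, _ => PEmpty.elim r
    | 1, r, _ => PEmpty.elim r
    | 2, r, _ => PEmpty.elim r
    | _ + 4, r, _ => PEmpty.elim r

/-- The `cLang`-structure determined by a ternary relation. -/
def cRelStructure (N : Type w) (C : N → N → N → Prop) : cLang.Structure N where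
  funMap {_} f _ := PEmpty.elim f
  RelMap {n} r x :=
    match n, r, x with
    | 3, _, x => C (x 0) (x 1) (x 2)
    | 0, r, _ => PEmpty.elim r
    | 1, r, _ => PEmpty.elim r
    | 2, r, _ => PEmpty.elim r
    | _ + 4, r, _ => PEmpty.elim r

/-- The `chainLang R`-structure (`L_V`-structure) on a chain `Δ` with maximum `infty`
and action `act` of `R`. -/
def chainStructure (R : Type v) [Ring R] (Δ : Type w) [LinearOrder Δ]
    (infty : Δ) (act : Δ → R → Δ) : (chainLang R).Structure Δ where
  funMap {n} f x :=
    match n, f, x with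
    | 0, _, _ => infty
    | 1, r, x => act (x 0) r
    | _ + 2, f, _ => PEmpty.elim f
  RelMap {n} r x :=
    match n, r, x with
    | 2, _, x => x 0 < x 1
    | 0, r, _ => PEmpty.elim r
    | 1, r, _ => PEmpty.elim r
    | _ + 3, r, _ => PEmpty.elim r

/-- The `chainLang' R`-structure (`L'_V`-structure) on the chain of a valued module:
the unary predicate `Rₙ` holds at `γ` iff `|M_{≥γ}/M_{>γ}| ≥ n`. -/
def chainStructure' (R : Type v) [Ring R] (M : Type w) [AddCommGroup M]
    (Δ : Type x) [LinearOrder Δ] (infty : Δ) (act : Δ → R → Δ) (v : M → Δ) :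
    (chainLang' R).Structure Δ where
  funMap {n} f x :=
    match n, f, x with
    | 0, _, _ => infty
    | 1, r, x => act (x 0) r
    | _ + 2, f, _ => PEmpty.elim f
  RelMap {n} r x :=
    match n, r, x with
    | 1, k, x =>
        ∃ f : Fin k → M, (∀ i, x 0 ≤ v (f i)) ∧ ∀ i j, i ≠ j → v (f i - f j) ≤ x 0
    | 2, _, x => x 0 < x 1
    | 0, r, _ => PEmpty.elim r
    | _ + 3, r, _ => PEmpty.elim r

/-- The `chainLang R`-structure on a subset of a chain closed under the action. -/
def chainStructureOn (R : Type v) [Ring R] (Δ : Type w) [LinearOrder Δ]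
    (infty : Δ) (act : Δ → R → Δ) (S : Set Δ)
    (h0 : infty ∈ S) (hcl : ∀ δ ∈ S, ∀ r : R, act δ r ∈ S) :
    (chainLang R).Structure S where
  funMap {n} f x :=
    match n, f, x with
    | 0, _, _ => ⟨infty, h0⟩
    | 1, r, x => ⟨act (x 0 : Δ) r, hcl _ (x 0).2 r⟩
    | _ + 2, f, _ => PEmpty.elim f
  RelMap {n} r x :=
    match n, r, x with
    | 2, _, x => (x 0 : Δ) < (x 1 : Δ)
    | 0, r, _ => PEmpty.elim r
    | 1, r, _ => PEmpty.elim r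
    | _ + 3, r, _ => PEmpty.elim r

/-! ## Minimality notions -/

/-- A structure is strongly minimal if in every elementarily equivalent structure,
every subset definable with parameters is finite or cofinite. -/
def StronglyMinimal (L : FirstOrder.Language.{u, v}) (M : Type w) [L.Structure M] : Prop :=
  ∀ (N : Type w) [L.Structure N],
    L.ElementarilyEquivalent M N →
      ∀ s : Set N, Set.Definable₁ (univ : Set N) L s → s.Finite ∨ sᶜ.Finite

/-- Strong minimality of a subset of a module, viewed as a right `R`-module in its own
right (for any witness that it is a submodule). -/
def StronglyMinimalSet (R : Type v) [Ring R] {M : Type w} [AddCommGroup M]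
    [Module Rᵐᵒᵖ M] (N : Set M) : Prop :=
  ∀ h : SubmoduleSet R M N,
    letI := setModStructure R M N h
    StronglyMinimal (modLang R) N

/-- A subset is quantifier-free definable, with parameters, using only the ternary
relation `C`. -/
def QFCDefinable {N : Type w} (C : N → N → N → Prop) (s : Set N) : Prop :=
  letI : cLang.Structure N := cRelStructure N C
  ∃ (k : ℕ) (φ : cLang.Formula (Fin k ⊕ Fin 1)) (c : Fin k → N),
    φ.IsQF ∧ s = {a : N | φ.Realize (Sum.elim c fun _ => a)}

/-- A structure in a language `L` with a distinguished ternary relation symbol `c` is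
`C`-minimal if in every elementarily equivalent structure, every subset definable with
parameters is quantifier-free definable using only the relation `C`. -/
def CMinimal (L : FirstOrder.Language.{u, v}) (c : L.Relations 3) (M : Type w) [L.Structure M] :
    Prop :=
  ∀ (N : Type w) [L.Structure N],
    L.ElementarilyEquivalent M N →
      ∀ s : Set N, Set.Definable₁ (univ : Set N) L s →
        QFCDefinable (fun a b d => Structure.RelMap c ![a, b, d]) s

/-- `C`-minimality of a subset of a module closed under the module operations,
with the `C`-relation restricted from the ambient module. -/
def CMinimalSet (R : Type v) [Ring R] (M : Type w) [AddCommGroup M] [Module Rᵐᵒᵖ M]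
    (N : Set M) (C : M → M → M → Prop) : Prop :=
  ∀ h : SubmoduleSet R M N,
    letI := cModStructureSet R M N h C
    CMinimal (cModLang R) PUnit.unit N

/-- A point or an interval in a linear order. -/
def IsIntervalOrPoint {Δ : Type w} [LinearOrder Δ] (s : Set Δ) : Prop :=
  (∃ a, s = {a}) ∨ (∃ a b, s = Ioo a b) ∨ (∃ a b, s = Ico a b) ∨ (∃ a b, s = Ioc a b) ∨
  (∃ a b, s = Icc a b) ∨ (∃ a, s = Ioi a) ∨ (∃ a, s = Ici a) ∨ (∃ a, s = Iio a) ∨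
  (∃ a, s = Iic a) ∨ s = univ ∨ s = ∅

/-- A linearly ordered structure is o-minimal if every subset definable with parameters
is a finite union of points and intervals. -/
def OMinimal (L : FirstOrder.Language.{u, v}) (Δ : Type w) [LinearOrder Δ] [L.Structure Δ] : Prop :=
  ∀ s : Set Δ, Set.Definable₁ (univ : Set Δ) L s →
    ∃ (n : ℕ) (f : Fin n → Set Δ), (∀ i, IsIntervalOrPoint (f i)) ∧ s = ⋃ i, f i

/-- o-minimality of a subset of a chain (closed under the action and containing `∞`),
as an `L_V`-structure. -/
def OMinimalChainOn (R : Type v) [Ring R] (Δ : Type w) [LinearOrder Δ]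
    (infty : Δ) (act : Δ → R → Δ) (S : Set Δ) : Prop :=
  ∀ (h0 : infty ∈ S) (hcl : ∀ δ ∈ S, ∀ r : R, act δ r ∈ S),
    letI := chainStructureOn R Δ infty act S h0 hcl
    OMinimal (chainLang R) S

/-! ## Valued `R`-modules -/

/-- `(M, Δ, infty, act, v)` is a valued right `R`-module over the skew polynomial ring
`R = K[t;φ]` (with `K` acting through `ι`): `Δ` is an `R`-chain with maximum `infty`
and `v` is a surjective valuation compatible with the action. -/
structure IsValuedRMod (K : Type u) [Field K] (φ : K →+* K) (R : Type v) [Ring R]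
    (ι : K →+* R) (t : R) (M : Type w) [AddCommGroup M] [Module Rᵐᵒᵖ M]
    (Δ : Type x) [LinearOrder Δ] (infty : Δ) (act : Δ → R → Δ) (v : M → Δ) : Prop where
  le_infty : ∀ γ : Δ, γ ≤ infty
  actK_strictMono : ∀ a : K, a ≠ 0 → ∀ γ δ : Δ, γ ≠ infty → δ ≠ infty → δ < γ →
    act δ (ι a) < act γ (ι a)
  actK_mul : ∀ a b : K, a ≠ 0 → b ≠ 0 → ∀ γ : Δ, γ ≠ infty →
    act γ (ι (a * b)) = act (act γ (ι a)) (ι b)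
  actK_expansive : ∀ a : K, a ≠ 0 → ∀ γ δ : Δ, γ ≠ infty → δ ≠ infty →
    γ < act γ (ι a) → δ < act δ (ι a)
  actK_add : ∀ a b : K, ∀ γ : Δ, γ ≠ infty →
    min (act γ (ι a)) (act γ (ι b)) ≤ act γ (ι (a + b))
  actK_sub : ∀ a b : K, ∀ γ : Δ, γ ≠ infty →
    min (act γ (ι a)) (act γ (ι b)) ≤ act γ (ι (a - b))
  act_zero : ∀ γ : Δ, act γ 0 = infty
  act_one : ∀ γ : Δ, act γ 1 = γ
  actK_infty : ∀ b : K, b ≠ 0 → act infty (ι b) = infty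
  act_t_strictMono : ∀ γ δ : Δ, γ ≠ infty → δ ≠ infty → δ < γ → act δ t < act γ t
  act_t_infty : act infty t = infty
  act_t_ne_infty : ∀ γ : Δ, γ ≠ infty → act γ t ≠ infty
  act_ta : ∀ (a : K) (γ : Δ), act γ (t * ι a) = act (act γ t) (ι a)
  act_tpow : ∀ (n : ℕ) (a : K) (γ : Δ),
    act γ (t ^ (n + 1) * ι a) = act (act γ (t ^ n)) (t * ι a)
  act_min : ∀ (c : ℕ →₀ K) (hc : c.support.Nonempty), ∀ γ : Δ, γ ≠ infty →
    act γ (c.sum fun i a => t ^ i * ι a) = c.support.inf' hc fun i => act γ (t ^ i * ι (c i))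
  act_monomial_lt : ∀ (m n : ℕ) (a b : K), a ≠ 0 → b ≠ 0 → n < m → ∀ γ : Δ, γ ≠ infty →
    act γ (t ^ m * ι a) ≤ act γ (t ^ n * ι b) →
    ∀ δ : Δ, δ < γ → act δ (t ^ m * ι a) < act δ (t ^ n * ι b)
  v_surjective : Function.Surjective v
  v_eq_infty_iff : ∀ z : M, v z = infty ↔ z = 0
  v_sub : ∀ z y : M, min (v z) (v y) ≤ v (z - y)
  v_smulK : ∀ (z : M) (a : K), v (rsmul z (ι a)) = act (v z) (ι a)
  v_smul_t : ∀ z : M, v (rsmul z t) = act (v z) t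

/-- The canonical `C`-relation of a valued module (additive convention):
`C(x,y,z) ⟺ v(x−y) = v(x−z) < v(y−z)`. -/
def Crel {M : Type w} [AddCommGroup M] {Δ : Type x} [LinearOrder Δ] (v : M → Δ)
    (a b c : M) : Prop :=
  v (a - b) = v (a - c) ∧ v (a - c) < v (b - c)

/-- `(M,v)` is trivially valued: `v` takes at most two values. -/
def TriviallyValued {M : Type w} [AddCommGroup M] {Δ : Type x} (v : M → Δ) : Prop :=
  ∀ a b : M, a ≠ 0 → b ≠ 0 → v a = v b

/-- `(M,v)` is `K`-trivially valued: `v(x.a) = v(x)` for every `a ∈ K^×`. -/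
def KTriviallyValued {K : Type u} [Field K] {R : Type v} [Ring R] (ι : K →+* R)
    {M : Type w} [AddCommGroup M] [Module Rᵐᵒᵖ M] {Δ : Type x} (v : M → Δ) : Prop :=
  ∀ (z : M) (a : K), a ≠ 0 → v (rsmul z (ι a)) = v z

/-- `M_{>θ} = {x | v(x.t) > v(x)}`. -/
def gtTheta {R : Type v} [Ring R] (t : R) {M : Type w} [AddCommGroup M] [Module Rᵐᵒᵖ M]
    {Δ : Type x} [LinearOrder Δ] (v : M → Δ) : Set M :=
  {z : M | v z < v (rsmul z t)}

/-- `M_{≥θ} = {x | v(x.t) ≥ v(x)}`. -/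
def geTheta {R : Type v} [Ring R] (t : R) {M : Type w} [AddCommGroup M] [Module Rᵐᵒᵖ M]
    {Δ : Type x} [LinearOrder Δ] (v : M → Δ) : Set M :=
  {z : M | v z ≤ v (rsmul z t)}

/-- `(M,v)` is henselian: for every separable `s`, `x ↦ x.s` is a bijection of `M_{>θ}`. -/
def HenselianVM {R : Type v} [Ring R] (t : R) {M : Type w} [AddCommGroup M]
    [Module Rᵐᵒᵖ M] {Δ : Type x} [LinearOrder Δ] (v : M → Δ) : Prop :=
  ∀ s : R, SeparablePoly t s →
    Set.BijOn (fun z : M => rsmul z s) (gtTheta t v) (gtTheta t v)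

/-- `B` is a subset of `S` of finite index (finitely many additive translates of `B`
cover `S`). -/
def HasFiniteIndexIn {M : Type w} [AddCommGroup M] (B S : Set M) : Prop :=
  B ⊆ S ∧ ∃ (n : ℕ) (a : Fin n → M), S ⊆ ⋃ i, (fun b => b + a i) '' B

/-- `S` contains a ball (centered at `0`, of radius `≠ ∞`) of finite index in `S`. -/
def ContainsBallFiniteIndex {M : Type w} [AddCommGroup M] {Δ : Type x} [LinearOrder Δ]
    (v : M → Δ) (infty : Δ) (S : Set M) : Prop :=
  ∃ γ : Δ, γ ≠ infty ∧
    (HasFiniteIndexIn {z : M | γ ≤ v z} S ∨ HasFiniteIndexIn {z : M | γ < v z} S)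

/-- `(M,v)` is residually divisible and affinely maximal: for every nonzero `r ∈ R` and
`z ∈ M` there is `y` with `y.r = z` and `v(y.r) = v(y)·r`. -/
def ResDivAffMax {R : Type v} [Ring R] {M : Type w} [AddCommGroup M] [Module Rᵐᵒᵖ M]
    {Δ : Type x} (act : Δ → R → Δ) (v : M → Δ) : Prop :=
  ∀ r : R, r ≠ 0 → ∀ z : M, ∃ y : M, rsmul y r = z ∧ v (rsmul y r) = act (v y) r

/-! ## Valued fields as valued modules -/

/-- The valuation ring of a (multiplicative Krull) valuation. -/
def ValRing {F : Type u} {Γ₀ : Type v} [Field F] [LinearOrderedCommGroupWithZero Γ₀]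
    (v : Valuation F Γ₀) : Set F :=
  {z : F | v z ≤ 1}

/-- The canonical `C`-relation of a (multiplicatively written) valued field:
in additive notation, `C(x,y,z) ⟺ v(x−y) = v(x−z) < v(y−z)`. -/
def valC {F : Type u} {Γ₀ : Type v} [Field F] [LinearOrderedCommGroupWithZero Γ₀]
    (v : Valuation F Γ₀) (a b c : F) : Prop :=
  v (a - b) = v (a - c) ∧ v (b - c) < v (a - c)

/-- A valuation is henselian (Newton–Hensel approximation property on the valuation
ring). -/
def HenselianValuation {F : Type u} {Γ₀ : Type v} [Field F]
    [LinearOrderedCommGroupWithZero Γ₀] (v : Valuation F Γ₀) : Prop :=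
  ∀ P : Polynomial F, (∀ i, v (P.coeff i) ≤ 1) → ∀ a : F, v a ≤ 1 →
    v (P.eval a) < v (P.derivative.eval a) ^ 2 →
    ∃ b : F, v b ≤ 1 ∧ P.eval b = 0 ∧ v (b - a) < v (P.derivative.eval a)

/-- The residue field of `v` is finite. -/
def FiniteResidueField {F : Type u} {Γ₀ : Type v} [Field F]
    [LinearOrderedCommGroupWithZero Γ₀] (v : Valuation F Γ₀) : Prop :=
  ∃ n : ℕ, ∀ z : Fin (n + 1) → F, (∀ i, v (z i) ≤ 1) →
    ∃ i j, i ≠ j ∧ v (z i - z j) < 1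

/-- The residue field of `v` is `p`-closed: every nonzero additive polynomial
`∑ aᵢ X^{pⁱ}` over the residue field is surjective. -/
def PClosedResidue (p : ℕ) {F : Type u} {Γ₀ : Type v} [Field F]
    [LinearOrderedCommGroupWithZero Γ₀] (v : Valuation F Γ₀) : Prop :=
  ∀ (d : ℕ) (a : Fin (d + 1) → F), (∀ i, v (a i) ≤ 1) → (∃ i, v (a i) = 1) →
    ∀ z : F, v z ≤ 1 → ∃ y : F, v y ≤ 1 ∧ v ((∑ i, a i * y ^ p ^ (i : ℕ)) - z) < 1

/-- A field `k` of characteristic `p` is `p`-closed: every nonzero additive polynomial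
with coefficients in `k` is surjective on `k`. -/
def PClosedField (p : ℕ) (k : Type u) [Field k] : Prop :=
  ∀ (d : ℕ) (a : Fin (d + 1) → k), (∃ i, a i ≠ 0) →
    Function.Surjective fun z : k => ∑ i, a i * z ^ p ^ (i : ℕ)

/-- The value group of `v` is divisible. -/
def DivisibleValueGroup {F : Type u} {Γ₀ : Type v} [Field F]
    [LinearOrderedCommGroupWithZero Γ₀] (v : Valuation F Γ₀) : Prop :=
  ∀ z : F, z ≠ 0 → ∀ n : ℕ, 0 < n → ∃ y : F, y ≠ 0 ∧ v y ^ n = v z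

/-- `(F,v)` is algebraically maximal: it has no proper immediate algebraic extension. -/
def AlgebraicallyMaximal {F : Type u} {Γ₀ : Type v} [Field F]
    [LinearOrderedCommGroupWithZero Γ₀] (v : Valuation F Γ₀) : Prop :=
  ∀ (L : Type u) [Field L] [Algebra F L], Algebra.IsAlgebraic F L →
    ∀ w : Valuation L Γ₀,
      (∀ z : F, w (algebraMap F L z) = v z) →
      (∀ z : L, ∃ y : F, w z = v y) →
      (∀ z : L, w z ≤ 1 → ∃ y : F, w (z - algebraMap F L y) < 1) →
      Function.Surjective (algebraMap F L)

/-! ## Puiseux series -/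

/-- The set of Puiseux series over `k`, inside the Hahn series field `k((ℚ))`:
series whose support is contained in `(1/n)ℤ` for some `n ≥ 1`. -/
def PuiseuxSet (k : Type u) [Field k] : Set (HahnSeries ℚ k) :=
  {f | ∃ n : ℕ, 0 < n ∧ ∀ q ∈ f.support, ∃ m : ℤ, q = (m : ℚ) / (n : ℚ)}

/-- The ring of Puiseux series over `k`: the valuation ring of the field of Puiseux
series. -/
def PuiseuxValRing (k : Type u) [Field k] : Set (HahnSeries ℚ k) :=
  {f | f ∈ PuiseuxSet k ∧ ∀ q ∈ f.support, 0 ≤ q}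

/-- The canonical `C`-relation on Hahn series over `ℚ`, induced by the order valuation
(additive convention). -/
def hahnC {k : Type u} [Field k] (a b c : HahnSeries ℚ k) : Prop :=
  (a - b).orderTop = (a - c).orderTop ∧ (a - c).orderTop < (b - c).orderTop

section Aux
variable {R : Type v} [Ring R] {M : Type w} [AddCommGroup M] [Module Rᵐᵒᵖ M]

lemma ker_definable (r : R) :
    Set.Definable₁ (univ : Set M) (modLang R) {z : M | rsmul z r = 0} := by
  apply Set.Definable.mono (A := (∅ : Set M)) _ (empty_subset _)
  rw [Set.empty_definable_iff]
  refine ⟨Term.equal (Term.func (l := 1) (some r : (modLang R).Functions 1) ![Term.var 0])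
    (Term.func (l := 0) (PUnit.unit : (modLang R).Functions 0) ![]), ?_⟩
  ext x
  simp only [mem_setOf_eq, Formula.realize_equal, Term.realize_func, Term.realize_var,
    Matrix.cons_val_zero]
  rfl

lemma range_definable (r : R) :
    Set.Definable₁ (univ : Set M) (modLang R) (Set.range (fun z : M => rsmul z r)) := by
  apply Set.Definable.mono (A := (∅ : Set M)) _ (empty_subset _)
  rw [Set.empty_definable_iff]
  refine ⟨BoundedFormula.ex (Term.bdEqual
      (Term.func (l := 1) (some r : (modLang R).Functions 1) ![Term.var (Sum.inr 0)])
      (Term.var (Sum.inl 0))), ?_⟩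
  ext x
  simp only [mem_setOf_eq, mem_range, Formula.Realize, BoundedFormula.realize_ex,
    BoundedFormula.realize_bdEqual, Term.realize_func, Term.realize_var, Sum.elim_inr,
    Sum.elim_inl, Matrix.cons_val_zero]
  constructor
  · rintro ⟨z, hz⟩; exact ⟨z, hz⟩
  · rintro ⟨a, ha⟩; exact ⟨a, ha⟩

section Alg
variable {M : Type w} [AddCommGroup M]

lemma subgroup_eq_univ_of_compl_finite [Infinite M] (H : AddSubgroup M)
    (hc : ((H : Set M)ᶜ).Finite) : ∀ x : M, x ∈ H := by
  by_contra hne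
  push_neg at hne
  obtain ⟨a, ha⟩ := hne
  have hHinf : (H : Set M).Infinite := by
    by_contra hfin
    rw [Set.not_infinite] at hfin
    have : (Set.univ : Set M).Finite := by
      have : (Set.univ : Set M) ⊆ (H : Set M) ∪ (H : Set M)ᶜ := by
        simp [Set.union_compl_self]
      exact Set.Finite.subset (hfin.union hc) this
    exact Set.infinite_univ this
  have himg : ((fun x => a + x) '' (H : Set M)).Infinite :=
    hHinf.image (Set.injOn_of_injective (add_right_injective a))
  have hsub : ((fun x => a + x) '' (H : Set M)) ⊆ (H : Set M)ᶜ := by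
    rintro _ ⟨h, hh, rfl⟩ hmem
    exact ha (by simpa using H.sub_mem hmem hh)
  exact himg (hc.subset hsub)

lemma range_infinite_of_ker_finite [Infinite M] (f : M →+ M)
    (hk : {z : M | f z = 0}.Finite) : (Set.range f).Infinite := by
  intro hr
  have : (Set.univ : Set M).Finite := by
    have hcover : (Set.univ : Set M) ⊆ ⋃ y ∈ Set.range f, f ⁻¹' {y} := by
      intro x _
      exact Set.mem_biUnion (Set.mem_range_self x) rfl
    refine Set.Finite.subset (Set.Finite.biUnion hr fun y hy => ?_) hcover
    obtain ⟨x₀, rfl⟩ := hy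
    have hsub : f ⁻¹' {f x₀} ⊆ (fun z => x₀ + z) '' {z : M | f z = 0} := by
      intro x hx
      refine ⟨x - x₀, ?_, add_sub_cancel x₀ x⟩
      simp only [Set.mem_setOf_eq, map_sub]
      rw [Set.mem_preimage, Set.mem_singleton_iff] at hx
      rw [hx, sub_self]
    exact (hk.image _).subset hsub
  exact Set.infinite_univ this

end Alg

/-- in an infinite strongly minimal right `R`-module, for every nonzero
`r ∈ R`: `ann_M(r)` finite ↔ `M.r ≠ 0` ↔ `M.r = M`. -/
theorem stmt_3 (K : Type u) [Field K] (φ : K →+* K) (R : Type v) [Ring R]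
    (ι : K →+* R) (t : R) (hR : IsSkewPolyRing K φ R ι t)
    (M : Type w) [AddCommGroup M] [Module Rᵐᵒᵖ M] (hinf : Infinite M)
    (hsm : StronglyMinimal (modLang R) M) (r : R) (hr : r ≠ 0) :
    ({z : M | rsmul z r = 0}.Finite ↔ ∃ z : M, rsmul z r ≠ 0) ∧
    ((∃ z : M, rsmul z r ≠ 0) ↔ Set.range (fun z : M => rsmul z r) = univ) := by
  haveI := hinf
  set f : M →+ M := AddMonoidHom.mk' (fun x => rsmul x r) (fun a b => smul_add _ a b) with hf
  have hfz : ∀ z : M, f z = rsmul z r := fun z => rfl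
  -- kernel and range as subgroups
  have hK : ∃ H : AddSubgroup M, (H : Set M) = {z : M | rsmul z r = 0} := by
    refine ⟨AddMonoidHom.ker f, ?_⟩
    ext z; simp [AddMonoidHom.mem_ker, hfz]
  have hRg : ∃ H : AddSubgroup M, (H : Set M) = Set.range (fun z : M => rsmul z r) := by
    refine ⟨AddMonoidHom.range f, ?_⟩
    ext z; simp [AddMonoidHom.mem_range, hfz]
  -- case analysis from strong minimality
  have hkerCase : ¬ {z : M | rsmul z r = 0}.Finite → ∀ z : M, rsmul z r = 0 := by
    intro hker
    rcases hsm M rfl _ (ker_definable (M := M) r) with h | h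
    · exact absurd h hker
    · obtain ⟨H, hH⟩ := hK
      intro z
      have hm := subgroup_eq_univ_of_compl_finite H (by rw [hH]; exact h) z
      have : z ∈ (H : Set M) := hm
      rw [hH] at this
      exact this
  have hA : {z : M | rsmul z r = 0}.Finite → Set.range (fun z : M => rsmul z r) = univ := by
    intro hker
    have hinfR : (Set.range (fun z : M => rsmul z r)).Infinite := by
      have := range_infinite_of_ker_finite f (by simpa [hfz] using hker)
      exact this
    rcases hsm M rfl _ (range_definable (M := M) r) with h | h
    · exact absurd h hinfR
    · obtain ⟨H, hH⟩ := hRg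
      ext z
      simp only [Set.mem_univ, iff_true]
      have hm := subgroup_eq_univ_of_compl_finite H (by rw [hH]; exact h) z
      have : z ∈ (H : Set M) := hm
      rwa [hH] at this
  obtain ⟨y, hy⟩ := exists_ne (0 : M)
  constructor
  · constructor
    · intro hker
      have hr := hA hker
      have : y ∈ Set.range (fun z : M => rsmul z r) := hr ▸ Set.mem_univ y
      obtain ⟨z, hz⟩ := this
      exact ⟨z, by simp only at hz; rw [hz]; exact hy⟩
    · intro ⟨z, hz⟩
      by_contra hker
      exact hz (hkerCase hker z)
  · constructor
    · intro ⟨z, hz⟩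
      apply hA
      by_contra hker
      exact hz (hkerCase hker z)
    · intro hr
      have : y ∈ Set.range (fun z : M => rsmul z r) := hr ▸ Set.mem_univ y
      obtain ⟨z, hz⟩ := this
      exact ⟨z, by simp only at hz; rw [hz]; exact hy⟩
end Aux
end

section
/- Let M be an infinite strongly minimal right R-module (equivalently, an infinite strongly minimal trivially valued R-module) and let I = {r ∈ R : M.r = 0}. Then either I = {0}, in which case M is divisible and ann_M(r) is finite for every nonzero r ∈ R; or I ≠ {0}, in which case I = rR for an irreducible polynomial r ∈ R and M is an (R/rR)-vector space. -/
open FirstOrder Language Set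

universe u v w x y

/-! ### Auxiliary infrastructure -/

section
variable {K : Type u} [Field K] (φ : K →+* K) {R : Type v} [Ring R]
  (ι : K →+* R) (t : R)

noncomputable def EvalSP (c : ℕ →₀ K) : R :=
  c.sum fun i a => t ^ i * ι a

lemma EvalSP_zero : EvalSP ι t (0 : ℕ →₀ K) = 0 := Finsupp.sum_zero_index

lemma EvalSP_add (c d : ℕ →₀ K) : EvalSP ι t (c + d) = EvalSP ι t c + EvalSP ι t d :=
  Finsupp.sum_add_index' (fun i => by simp) (fun i a b => by rw [map_add, mul_add])

noncomputable def EvalSPHom : (ℕ →₀ K) →+ R :=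
  AddMonoidHom.mk' (EvalSP ι t) (EvalSP_add ι t)

lemma EvalSP_sub (c d : ℕ →₀ K) : EvalSP ι t (c - d) = EvalSP ι t c - EvalSP ι t d :=
  map_sub (EvalSPHom ι t) c d

lemma EvalSP_single (i : ℕ) (a : K) : EvalSP ι t (Finsupp.single i a) = t ^ i * ι a :=
  Finsupp.sum_single_index (by simp)

def cdeg (c : ℕ →₀ K) : ℕ := c.support.sup id

lemma cdeg_mem {c : ℕ →₀ K} (h : c ≠ 0) : cdeg c ∈ c.support := by
  have hne : c.support.Nonempty := Finsupp.support_nonempty_iff.mpr h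
  have h2 := Finset.max'_mem c.support hne
  rwa [Finset.max'_eq_sup', Finset.sup'_eq_sup] at h2

lemma coeff_cdeg_ne_zero {c : ℕ →₀ K} (h : c ≠ 0) : c (cdeg c) ≠ 0 :=
  Finsupp.mem_support_iff.mp (cdeg_mem h)

lemma le_cdeg {c : ℕ →₀ K} {i : ℕ} (h : c i ≠ 0) : i ≤ cdeg c :=
  Finset.le_sup (f := id) (Finsupp.mem_support_iff.mpr h)

lemma coeff_zero_of_cdeg_lt {c : ℕ →₀ K} {j : ℕ} (h : cdeg c < j) : c j = 0 := by
  by_contra hc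
  exact absurd (le_cdeg hc) (by omega)

noncomputable def shiftF (c : ℕ →₀ K) (k : ℕ) (b : K) : ℕ →₀ K :=
  Finsupp.mapDomain (· + k) (c.mapRange (fun a => (φ ^ k) a * b) (by simp))

lemma shiftF_apply_add (c : ℕ →₀ K) (k : ℕ) (b : K) (i : ℕ) :
    shiftF φ c k b (i + k) = (φ ^ k) (c i) * b := by
  unfold shiftF
  rw [Finsupp.mapDomain_apply (add_left_injective k)]
  simp

lemma shiftF_apply_lt {j k : ℕ} (h : j < k) (c : ℕ →₀ K) (b : K) :
    shiftF φ c k b j = 0 := by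
  unfold shiftF
  apply Finsupp.mapDomain_notin_range
  rintro ⟨i, hi⟩
  simp only at hi
  omega

lemma shiftF_apply_ge {j k : ℕ} (h : k ≤ j) (c : ℕ →₀ K) (b : K) :
    shiftF φ c k b j = (φ ^ k) (c (j - k)) * b := by
  obtain ⟨i, rfl⟩ : ∃ i, j = i + k := ⟨j - k, by omega⟩
  rw [shiftF_apply_add]
  simp
end


section
variable {K : Type u} [Field K] {φ : K →+* K} {R : Type v} [Ring R]
  {ι : K →+* R} {t : R}

lemma commute_pow (hR : IsSkewPolyRing K φ R ι t) (a : K) (k : ℕ) :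
    ι a * t ^ k = t ^ k * ι ((φ ^ k) a) := by
  induction k with
  | zero => simp
  | succ k ih =>
    rw [pow_succ, ← mul_assoc, ih, mul_assoc, hR.commute_rule, ← mul_assoc, ← pow_succ]
    congr 2
    rw [pow_succ']
    rfl
end
section
variable {K : Type u} [Field K] {φ : K →+* K} {R : Type v} [Ring R]
  {ι : K →+* R} {t : R} (hR : IsSkewPolyRing K φ R ι t)

include hR

noncomputable def repSP (r : R) : ℕ →₀ K := (hR.unique_rep r).choose

lemma EvalSP_repSP (r : R) : EvalSP ι t (repSP hR r) = r :=
  ((hR.unique_rep r).choose_spec.1).symm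

lemma repSP_eq {r : R} {c : ℕ →₀ K} (h : r = EvalSP ι t c) : repSP hR r = c :=
  ((hR.unique_rep r).choose_spec.2 c h).symm

lemma repSP_EvalSP (c : ℕ →₀ K) : repSP hR (EvalSP ι t c) = c := repSP_eq hR rfl

lemma repSP_zero : repSP hR (0 : R) = 0 := repSP_eq hR (EvalSP_zero ι t).symm

lemma EvalSP_eq_zero_iff {c : ℕ →₀ K} : EvalSP ι t c = 0 ↔ c = 0 := by
  constructor
  · intro h
    have := repSP_EvalSP hR c
    rw [h, repSP_zero hR] at this
    exact this.symm
  · rintro rfl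
    exact EvalSP_zero ι t

lemma repSP_ne_zero {r : R} (h : r ≠ 0) : repSP hR r ≠ 0 := by
  intro hc
  apply h
  rw [← EvalSP_repSP hR r, hc, EvalSP_zero]

noncomputable def degSP (r : R) : ℕ := cdeg (repSP hR r)

lemma EvalSP_mul_monomial (c : ℕ →₀ K) (k : ℕ) (b : K) :
    EvalSP ι t c * (t ^ k * ι b) = EvalSP ι t (shiftF φ c k b) := by
  unfold EvalSP shiftF
  rw [Finsupp.sum_mapDomain_index (fun i => by simp) (fun i a b' => by rw [map_add, mul_add]),
      Finsupp.sum_mapRange_index (fun i => by simp), Finsupp.sum_mul]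
  apply Finsupp.sum_congr
  intro i _
  have h1 : ι (c i) * t ^ k = t ^ k * ι ((φ ^ k) (c i)) := commute_pow hR (c i) k
  calc t ^ i * ι (c i) * (t ^ k * ι b) = t ^ i * (ι (c i) * t ^ k) * ι b := by
        noncomm_ring
    _ = t ^ i * (t ^ k * ι ((φ ^ k) (c i))) * ι b := by rw [h1]
    _ = t ^ (i + k) * ι ((φ ^ k) (c i) * b) := by rw [pow_add, map_mul]; noncomm_ring

omit hR in
noncomputable def convF (φ : K →+* K) (c d : ℕ →₀ K) : ℕ →₀ K :=
  d.sum fun k b => shiftF φ c k b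

lemma EvalSP_mul (c d : ℕ →₀ K) :
    EvalSP ι t c * EvalSP ι t d = EvalSP ι t (convF φ c d) := by
  have h2 : EvalSP ι t (convF φ c d) = d.sum fun k b => EvalSP ι t (shiftF φ c k b) :=
    map_finsuppSum (EvalSPHom ι t) d _
  rw [h2]
  conv_lhs => rw [show EvalSP ι t d = d.sum fun k b => t ^ k * ι b from rfl]
  rw [Finsupp.mul_sum]
  exact Finsupp.sum_congr fun k _ => EvalSP_mul_monomial hR c k (d k)

omit hR in
lemma convF_apply (c d : ℕ →₀ K) (j : ℕ) :
    convF φ c d j = ∑ k ∈ d.support, shiftF φ c k (d k) j :=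
  Finsupp.finset_sum_apply _ _ _

omit hR in
lemma convF_top {c d : ℕ →₀ K} (hc : c ≠ 0) (hd : d ≠ 0) :
    convF φ c d (cdeg c + cdeg d) = (φ ^ cdeg d) (c (cdeg c)) * d (cdeg d) := by
  rw [convF_apply]
  rw [Finset.sum_eq_single (cdeg d)]
  · rw [shiftF_apply_add]
  · intro k hk hne
    have hk' : k ≤ cdeg d := le_cdeg (Finsupp.mem_support_iff.mp hk)
    rw [shiftF_apply_ge φ (show k ≤ cdeg c + cdeg d by omega),
      coeff_zero_of_cdeg_lt (show cdeg c < cdeg c + cdeg d - k by omega)]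
    simp
  · intro h
    exact absurd (cdeg_mem hd) h

omit hR in
lemma convF_zero_of_gt {c d : ℕ →₀ K} {j : ℕ} (h : cdeg c + cdeg d < j) :
    convF φ c d j = 0 := by
  rw [convF_apply]
  apply Finset.sum_eq_zero
  intro k hk
  have hk' : k ≤ cdeg d := le_cdeg (Finsupp.mem_support_iff.mp hk)
  rw [shiftF_apply_ge φ (show k ≤ j by omega),
    coeff_zero_of_cdeg_lt (show cdeg c < j - k by omega)]
  simp

omit hR in
lemma phi_pow_ne_zero {a : K} (h : a ≠ 0) (m : ℕ) : (φ ^ m) a ≠ 0 := by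
  intro hc
  apply h
  have : ((φ ^ m) a) * ((φ ^ m) a⁻¹) = 1 := by rw [← map_mul, mul_inv_cancel₀ h, map_one]
  rw [hc, zero_mul] at this
  exact absurd this.symm one_ne_zero

lemma degSP_mul {f g : R} (hf : f ≠ 0) (hg : g ≠ 0) :
    f * g ≠ 0 ∧ degSP hR (f * g) = degSP hR f + degSP hR g := by
  have hc : repSP hR f ≠ 0 := repSP_ne_zero hR hf
  have hd : repSP hR g ≠ 0 := repSP_ne_zero hR hg
  set c := repSP hR f
  set d := repSP hR g
  have hfg : f * g = EvalSP ι t (convF φ c d) := by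
    rw [← EvalSP_repSP hR f, ← EvalSP_repSP hR g, EvalSP_mul hR]
  have htop : convF φ c d (cdeg c + cdeg d) ≠ 0 := by
    rw [convF_top hc hd]
    exact mul_ne_zero (phi_pow_ne_zero (coeff_cdeg_ne_zero hc) _) (coeff_cdeg_ne_zero hd)
  have hconv : convF φ c d ≠ 0 := fun h0 => htop (by rw [h0]; rfl)
  constructor
  · rw [hfg]
    exact fun h0 => hconv ((EvalSP_eq_zero_iff hR).mp h0)
  · have hrep : repSP hR (f * g) = convF φ c d := by rw [hfg, repSP_EvalSP]
    have h1 : cdeg c + cdeg d ≤ cdeg (convF φ c d) := le_cdeg htop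
    have h2 : cdeg (convF φ c d) ≤ cdeg c + cdeg d := by
      by_contra hlt
      exact coeff_cdeg_ne_zero hconv (convF_zero_of_gt (by omega))
    have h3 : degSP hR (f * g) = cdeg (convF φ c d) := by unfold degSP; rw [hrep]
    have h4 : degSP hR f = cdeg c := rfl
    have h5 : degSP hR g = cdeg d := rfl
    omega

lemma isUnit_of_degSP_zero {x : R} (hx : x ≠ 0) (h : degSP hR x = 0) : IsUnit x := by
  have hc : repSP hR x ≠ 0 := repSP_ne_zero hR hx
  set c := repSP hR x with hcdef
  have hsub : c.support ⊆ {0} := by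
    intro i hi
    have := le_cdeg (Finsupp.mem_support_iff.mp hi)
    have h0 : cdeg c = 0 := h
    simp only [Finset.mem_singleton]
    omega
  have hsingle : c = Finsupp.single 0 (c 0) := Finsupp.support_subset_singleton.mp hsub
  have hx2 : x = ι (c 0) := by
    rw [← EvalSP_repSP hR x, ← hcdef]
    conv_lhs => rw [hsingle]
    rw [EvalSP_single]
    simp
  have hc0 : c 0 ≠ 0 := by
    intro h0
    apply hc
    rw [hsingle, h0, Finsupp.single_zero]
  refine ⟨⟨x, ι (c 0)⁻¹, ?_, ?_⟩, rfl⟩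
  · rw [hx2, ← map_mul, mul_inv_cancel₀ hc0, map_one]
  · rw [hx2, ← map_mul, inv_mul_cancel₀ hc0, map_one]

end
section
variable {K : Type u} [Field K] {φ : K →+* K} {R : Type v} [Ring R]
  {ι : K →+* R} {t : R} (hR : IsSkewPolyRing K φ R ι t)

include hR

lemma div_step {f g : R} (hf : f ≠ 0) (hg : g ≠ 0) (hdeg : degSP hR g ≤ degSP hR f) :
    ∃ q : R, f - g * q = 0 ∨ (f - g * q ≠ 0 ∧ degSP hR (f - g * q) < degSP hR f) := by
  have hc : repSP hR f ≠ 0 := repSP_ne_zero hR hf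
  have hd : repSP hR g ≠ 0 := repSP_ne_zero hR hg
  set c := repSP hR f with hcdef
  set d := repSP hR g with hddef
  set n := cdeg c with hndef
  set m := cdeg d with hmdef
  have hmn : m ≤ n := hdeg
  set k := n - m with hkdef
  set b := ((φ ^ k) (d m))⁻¹ * c n with hbdef
  refine ⟨t ^ k * ι b, ?_⟩
  have hφdm : (φ ^ k) (d m) ≠ 0 := phi_pow_ne_zero (coeff_cdeg_ne_zero hd) k
  have hgq : g * (t ^ k * ι b) = EvalSP ι t (shiftF φ d k b) := by
    conv_lhs => rw [← EvalSP_repSP hR g]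
    exact EvalSP_mul_monomial hR d k b
  have hsub : f - g * (t ^ k * ι b) = EvalSP ι t (c - shiftF φ d k b) := by
    rw [hgq, EvalSP_sub]
    conv_lhs => rw [← EvalSP_repSP hR f]
  have key : ∀ j, n ≤ j → (c - shiftF φ d k b) j = 0 := by
    intro j hj
    rw [Finsupp.sub_apply]
    rcases eq_or_lt_of_le hj with hj' | hj'
    · have hn : n = m + k := by omega
      rw [← hj', hn, shiftF_apply_add]
      rw [hbdef, mul_inv_cancel_left₀ hφdm]
      rw [← hn, hj']
      exact sub_self _
    · rw [coeff_zero_of_cdeg_lt (show cdeg c < j by omega),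
        shiftF_apply_ge φ (show k ≤ j by omega),
        coeff_zero_of_cdeg_lt (show cdeg d < j - k by omega)]
      simp
  rcases eq_or_ne (c - shiftF φ d k b) 0 with h0 | h0
  · left
    rw [hsub, h0, EvalSP_zero]
  · right
    have hne : f - g * (t ^ k * ι b) ≠ 0 := by
      rw [hsub]
      exact fun hcon => h0 ((EvalSP_eq_zero_iff hR).mp hcon)
    refine ⟨hne, ?_⟩
    have hrep : repSP hR (f - g * (t ^ k * ι b)) = c - shiftF φ d k b := repSP_eq hR hsub
    have hdd : degSP hR (f - g * (t ^ k * ι b)) = cdeg (c - shiftF φ d k b) := by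
      unfold degSP; rw [hrep]
    rw [hdd]
    have hdf : degSP hR f = n := rfl
    by_contra hcon
    exact coeff_cdeg_ne_zero h0 (key _ (by omega))

lemma div_algo {g : R} (hg : g ≠ 0) :
    ∀ (N : ℕ) (f : R), (f ≠ 0 → degSP hR f ≤ N) →
    ∃ q rem : R, f = g * q + rem ∧
      (rem = 0 ∨ (rem ≠ 0 ∧ degSP hR rem < degSP hR g)) := by
  intro N
  induction N using Nat.strong_induction_on with
  | _ N ih =>
    intro f hfN
    rcases eq_or_ne f 0 with rfl | hf
    · exact ⟨0, 0, by simp, Or.inl rfl⟩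
    rcases lt_or_ge (degSP hR f) (degSP hR g) with hlt | hge
    · exact ⟨0, f, by simp, Or.inr ⟨hf, hlt⟩⟩
    obtain ⟨q₀, hq₀⟩ := div_step hR hf hg hge
    rcases hq₀ with h0 | ⟨hne, hlt⟩
    · exact ⟨q₀, 0, by rw [← h0]; abel, Or.inl rfl⟩
    · have hN : degSP hR f ≤ N := hfN hf
      obtain ⟨q₁, rem, heq, hrem⟩ :=
        ih (degSP hR (f - g * q₀)) (by omega) (f - g * q₀) (fun _ => le_refl _)
      refine ⟨q₀ + q₁, rem, ?_, hrem⟩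
      have : f - g * q₀ = g * q₁ + rem := heq
      rw [mul_add]
      rw [← sub_eq_iff_eq_add'] at this ⊢
      rw [← this]
      abel

lemma principal_right_ideal (I : Set R) (h0 : (0 : R) ∈ I)
    (hsub : ∀ x ∈ I, ∀ y ∈ I, x - y ∈ I)
    (hmul : ∀ x ∈ I, ∀ s : R, x * s ∈ I)
    (hne : ∃ x ∈ I, x ≠ 0) :
    ∃ r ∈ I, r ≠ 0 ∧ (∀ x ∈ I, x ≠ 0 → degSP hR r ≤ degSP hR x) ∧
      I = {q : R | ∃ s : R, q = r * s} := by
  have hP : ∃ n : ℕ, ∃ x, x ∈ I ∧ x ≠ 0 ∧ degSP hR x = n := by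
    obtain ⟨x, hx, hx0⟩ := hne
    exact ⟨degSP hR x, x, hx, hx0, rfl⟩
  classical
  obtain ⟨r, hrI, hr0, hrdeg⟩ := Nat.find_spec hP
  have hmin : ∀ x ∈ I, x ≠ 0 → degSP hR r ≤ degSP hR x := by
    intro x hx hx0
    rw [hrdeg]
    by_contra hcon
    exact Nat.find_min hP (show degSP hR x < Nat.find hP by omega) ⟨x, hx, hx0, rfl⟩
  refine ⟨r, hrI, hr0, hmin, ?_⟩
  ext f
  constructor
  · intro hf
    obtain ⟨q, rem, heq, hrem⟩ := div_algo hR hr0 (degSP hR f) f (fun _ => le_refl _)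
    have hremI : rem ∈ I := by
      have : rem = f - r * q := by rw [heq]; abel
      rw [this]
      exact hsub f hf _ (hmul r hrI q)
    rcases hrem with rfl | ⟨hrne, hrlt⟩
    · exact ⟨q, by rw [heq, add_zero]⟩
    · exact absurd (hmin rem hremI hrne) (by omega)
  · rintro ⟨s, rfl⟩
    exact hmul r hrI s

end


section ModuleAux

variable {R : Type v} [Ring R] {M : Type w} [AddCommGroup M] [Module Rᵐᵒᵖ M]

lemma rsmul_mul (x : M) (a b : R) : rsmul x (a * b) = rsmul (rsmul x a) b := by
  simp only [rsmul, MulOpposite.op_mul, mul_smul]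

lemma rsmul_sub (x y : M) (r : R) : rsmul (x - y) r = rsmul x r - rsmul y r :=
  smul_sub _ _ _

lemma rsmul_zero' (r : R) : rsmul (0 : M) r = 0 := smul_zero _

lemma zero_rsmul (x : M) : rsmul x (0 : R) = 0 := by
  simp only [rsmul, MulOpposite.op_zero, zero_smul]

lemma one_rsmul (x : M) : rsmul x (1 : R) = x := by
  simp only [rsmul, MulOpposite.op_one, one_smul]

@[simp] lemma funMap_rsmul (r : R) (x : Fin 1 → M) :
    Structure.funMap (L := modLang R) (n := 1) (some r : (modLang R).Functions 1) x = rsmul (x 0) r :=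
  rfl

@[simp] lemma funMap_zeroF (f : (modLang R).Functions 0) (x : Fin 0 → M) :
    Structure.funMap (L := modLang R) f x = (0 : M) :=
  rfl

lemma definable_ann (r : R) :
    Set.Definable₁ (Set.univ : Set M) (modLang R) {z : M | rsmul z r = 0} := by
  apply Set.Definable.mono (A := (∅ : Set M)) _ (Set.empty_subset _)
  rw [Set.empty_definable_iff]
  refine ⟨Term.equal (Term.func (l := 1) (some r : (modLang R).Functions 1) ![Term.var 0])
    (Term.func (l := 0) (PUnit.unit : (modLang R).Functions 0) ![]), ?_⟩
  ext x
  simp [Term.equal, Formula.Realize, Term.realize, BoundedFormula.realize_bdEqual]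
  exact Iff.rfl

lemma definable_im (r : R) :
    Set.Definable₁ (Set.univ : Set M) (modLang R) {z : M | ∃ x : M, rsmul x r = z} := by
  apply Set.Definable.mono (A := (∅ : Set M)) _ (Set.empty_subset _)
  rw [Set.empty_definable_iff]
  refine ⟨BoundedFormula.ex (Term.bdEqual
    (Term.func (l := 1) (some r : (modLang R).Functions 1) ![Term.var (Sum.inr 0)])
    (Term.var (Sum.inl 0))), ?_⟩
  ext x
  simp [Formula.Realize, BoundedFormula.realize_ex, BoundedFormula.realize_bdEqual,
    Term.realize, Fin.snoc]

lemma sm_subgroup_dichotomy (hinf : Infinite M)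
    (hsm : StronglyMinimal (modLang R) M) (s : Set M)
    (hdef : Set.Definable₁ (Set.univ : Set M) (modLang R) s)
    (hsubs : ∀ x ∈ s, ∀ y ∈ s, x - y ∈ s) :
    s.Finite ∨ s = Set.univ := by
  rcases hsm M rfl s hdef with h | h
  · exact Or.inl h
  by_cases hu : s = Set.univ
  · exact Or.inr hu
  exfalso
  obtain ⟨a, ha⟩ : ∃ a : M, a ∉ s := by
    by_contra hc
    push_neg at hc
    exact hu (Set.eq_univ_of_forall hc)
  have himg : (fun x => a + x) '' s ⊆ sᶜ := by
    rintro _ ⟨x, hx, rfl⟩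
    intro hmem
    have := hsubs _ hmem _ hx
    rw [add_sub_cancel_right] at this
    exact ha this
  have hsfin : s.Finite :=
    Set.Finite.of_finite_image (h.subset himg) (add_right_injective a).injOn
  have : (Set.univ : Set M).Finite := by
    rw [← Set.union_compl_self s]
    exact hsfin.union h
  exact Set.infinite_univ this

lemma not_both_finite (hinf : Infinite M) (r : R)
    (hann : {z : M | rsmul z r = 0}.Finite)
    (him : {z : M | ∃ x : M, rsmul x r = z}.Finite) : False := by
  have hsub : (Set.univ : Set M) ⊆
      ⋃ y ∈ {z : M | ∃ x : M, rsmul x r = z}, {x : M | rsmul x r = y} := by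
    intro x _
    exact Set.mem_biUnion ⟨x, rfl⟩ rfl
  have hfib : ∀ y ∈ {z : M | ∃ x : M, rsmul x r = z}, {x : M | rsmul x r = y}.Finite := by
    rintro y ⟨x₀, hx₀⟩
    apply Set.Finite.subset (hann.image (fun z => x₀ + z))
    intro x hx
    refine ⟨x - x₀, ?_, by show x₀ + (x - x₀) = x; rw [add_comm, sub_add_cancel]⟩
    show rsmul (x - x₀) r = 0
    rw [rsmul_sub, hx, hx₀, sub_self]
  have : (Set.univ : Set M).Finite := Set.Finite.subset (Set.Finite.biUnion him hfib) hsub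
  exact Set.infinite_univ this

end ModuleAux


/-- the annihilator ideal of an infinite strongly minimal right
`R`-module either vanishes (and `M` is divisible with finite annihilators), or is
generated by an irreducible `r` with `R/rR` a field and `M` an `R/rR`-vector space. -/
theorem stmt_4 (K : Type u) [Field K] (φ : K →+* K) (R : Type v) [Ring R]
    (ι : K →+* R) (t : R) (hR : IsSkewPolyRing K φ R ι t)
    (M : Type w) [AddCommGroup M] [Module Rᵐᵒᵖ M] (hinf : Infinite M)
    (hsm : StronglyMinimal (modLang R) M) :
    ({r : R | ∀ z : M, rsmul z r = 0} = {0} →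
      RDivisible R M ∧ ∀ r : R, r ≠ 0 → {z : M | rsmul z r = 0}.Finite) ∧
    ({r : R | ∀ z : M, rsmul z r = 0} ≠ {0} →
      ∃ r : R, Irreducible r ∧
        {q : R | ∀ z : M, rsmul z q = 0} = {q : R | ∃ s : R, q = r * s} ∧
        QuotByIsDivisionRing R r ∧
        ∀ z : M, rsmul z r = 0) := by
  classical
  haveI := hinf
  have hannd : ∀ r : R, {z : M | rsmul z r = 0}.Finite ∨ {z : M | rsmul z r = 0} = Set.univ := by
    intro r
    apply sm_subgroup_dichotomy hinf hsm _ (definable_ann r)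
    intro x hx y hy
    simp only [Set.mem_setOf_eq] at hx hy ⊢
    rw [rsmul_sub, hx, hy, sub_self]
  have himd : ∀ r : R, {z : M | ∃ x : M, rsmul x r = z}.Finite ∨
      {z : M | ∃ x : M, rsmul x r = z} = Set.univ := by
    intro r
    apply sm_subgroup_dichotomy hinf hsm _ (definable_im r)
    rintro x ⟨u, hu⟩ y ⟨w, hw⟩
    exact ⟨u - w, by rw [rsmul_sub, hu, hw]⟩
  constructor
  · intro hI
    have hfin : ∀ r : R, r ≠ 0 → {z : M | rsmul z r = 0}.Finite := by
      intro r hr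
      rcases hannd r with h | h
      · exact h
      · exfalso
        apply hr
        have hrI : r ∈ {r : R | ∀ z : M, rsmul z r = 0} := by
          intro z
          have : z ∈ {z : M | rsmul z r = 0} := by rw [h]; exact Set.mem_univ z
          exact this
        rw [hI] at hrI
        exact hrI
    refine ⟨?_, hfin⟩
    intro r hr y
    rcases himd r with h | h
    · exact absurd (not_both_finite hinf r (hfin r hr) h) not_false
    · have : y ∈ {z : M | ∃ x : M, rsmul x r = z} := by rw [h]; exact Set.mem_univ y
      exact this
  · intro hI
    set I := {r : R | ∀ z : M, rsmul z r = 0} with hIdef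
    have h0I : (0 : R) ∈ I := fun z => zero_rsmul z
    have hsubI : ∀ x ∈ I, ∀ y ∈ I, x - y ∈ I := by
      intro x hx y hy z
      have hz : rsmul z (x - y) = rsmul z x - rsmul z y := by
        simp only [rsmul, MulOpposite.op_sub, sub_smul]
      rw [hz, hx z, hy z, sub_self]
    have hmulI : ∀ x ∈ I, ∀ s : R, x * s ∈ I := by
      intro x hx s z
      rw [rsmul_mul, hx z, rsmul_zero']
    have hneI : ∃ x ∈ I, x ≠ 0 := by
      by_contra hc
      push_neg at hc
      exact hI (Set.eq_singleton_iff_unique_mem.mpr ⟨h0I, hc⟩)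
    obtain ⟨r, hrI, hr0, hmin, hIeq⟩ := principal_right_ideal hR I h0I hsubI hmulI hneI
    have hleft : ∀ a x : R, x ∈ I → a * x ∈ I := by
      intro a x hx z
      rw [rsmul_mul]
      exact hx _
    have hone : ¬ ∃ s : R, (1 : R) = r * s := by
      rintro ⟨s, hs⟩
      have h1I : (1 : R) ∈ I := by rw [hIeq]; exact ⟨s, hs⟩
      obtain ⟨x, hx⟩ := exists_ne (0 : M)
      apply hx
      have h2 := h1I x
      rwa [one_rsmul] at h2
    have hprop2 : ∀ a s : R, ∃ s' : R, a * (r * s) = r * s' := by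
      intro a s
      have h1 : r * s ∈ I := by rw [hIeq]; exact ⟨s, rfl⟩
      have h2 : a * (r * s) ∈ I := hleft _ _ h1
      rw [hIeq] at h2
      exact h2
    have hnotunit : ¬ IsUnit r := by
      rintro ⟨u, rfl⟩
      exact hone ⟨↑u⁻¹, (Units.mul_inv u).symm⟩
    have hirr : Irreducible r := by
      refine ⟨hnotunit, ?_⟩
      intro a b hab
      have ha0 : a ≠ 0 := by rintro rfl; rw [zero_mul] at hab; exact hr0 hab
      have hb0 : b ≠ 0 := by rintro rfl; rw [mul_zero] at hab; exact hr0 hab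
      obtain ⟨hab0, habdeg⟩ := degSP_mul hR ha0 hb0
      rw [← hab] at habdeg
      rcases hannd a with hfa | huniva
      · rcases himd a with hfima | himua
        · exact absurd (not_both_finite hinf a hfa hfima) not_false
        · have hbI : b ∈ I := by
            intro z
            have hz : z ∈ {w : M | ∃ x : M, rsmul x a = w} := by
              rw [himua]; exact Set.mem_univ z
            obtain ⟨x, hx⟩ := hz
            rw [← hx, ← rsmul_mul, ← hab]
            exact hrI x
          have h1 := hmin b hbI hb0
          have hadeg : degSP hR a = 0 := by omega
          exact Or.inl (isUnit_of_degSP_zero hR ha0 hadeg)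
      · have haI : a ∈ I := by
          intro z
          have : z ∈ {w : M | rsmul w a = 0} := by rw [huniva]; exact Set.mem_univ z
          exact this
        have h1 := hmin a haI ha0
        have hbdeg : degSP hR b = 0 := by omega
        exact Or.inr (isUnit_of_degSP_zero hR hb0 hbdeg)
    have hinv : ∀ q : R, (¬ ∃ s : R, q = r * s) → ∃ q' w : R, q * q' - 1 = r * w := by
      intro q hq
      set J := {x : R | ∃ u w : R, x = q * u + r * w} with hJdef
      have hJ0 : (0 : R) ∈ J := ⟨0, 0, by simp⟩
      have hJsub : ∀ x ∈ J, ∀ y ∈ J, x - y ∈ J := by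
        rintro x ⟨u1, w1, rfl⟩ y ⟨u2, w2, rfl⟩
        exact ⟨u1 - u2, w1 - w2, by noncomm_ring⟩
      have hJmul : ∀ x ∈ J, ∀ s : R, x * s ∈ J := by
        rintro x ⟨u1, w1, rfl⟩ s
        exact ⟨u1 * s, w1 * s, by noncomm_ring⟩
      have hJne : ∃ x ∈ J, x ≠ 0 := ⟨r, ⟨0, 1, by simp⟩, hr0⟩
      obtain ⟨d, hdJ, hd0, hdmin, hJeq⟩ := principal_right_ideal hR J hJ0 hJsub hJmul hJne
      have hrJ : r ∈ J := ⟨0, 1, by simp⟩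
      have hqJ : q ∈ J := ⟨1, 0, by simp⟩
      rw [hJeq] at hrJ
      obtain ⟨e, he⟩ := hrJ
      rcases hirr.isUnit_or_isUnit he with hud | hue
      · obtain ⟨du, hdu⟩ := hud
        have h1J : (1 : R) ∈ J := by
          have h2 := hJmul d hdJ ↑du⁻¹
          rwa [← hdu, Units.mul_inv] at h2
        obtain ⟨u, w, h1⟩ := h1J
        refine ⟨u, -w, ?_⟩
        calc q * u - 1 = q * u - (q * u + r * w) := by rw [← h1]
          _ = r * -w := by rw [mul_neg]; abel
      · exfalso
        apply hq
        rw [hJeq] at hqJ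
        obtain ⟨s, hs⟩ := hqJ
        obtain ⟨eu, heu⟩ := hue
        refine ⟨↑eu⁻¹ * s, ?_⟩
        rw [hs, he, ← heu, mul_assoc, ← mul_assoc (eu : R), Units.mul_inv, one_mul]
    have hfull : ∀ q : R, (¬ ∃ s : R, q = r * s) →
        ∃ q' : R, (∃ s : R, q * q' - 1 = r * s) ∧ (∃ s : R, q' * q - 1 = r * s) := by
      intro q hq
      obtain ⟨q', w, hqq'⟩ := hinv q hq
      have hq'r : ¬ ∃ s : R, q' = r * s := by
        rintro ⟨s', rfl⟩
        apply hone
        obtain ⟨s'', hs''⟩ := hprop2 q s'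
        refine ⟨s'' - w, ?_⟩
        calc (1 : R) = q * (r * s') - (q * (r * s') - 1) := by abel
          _ = r * s'' - r * w := by rw [hqq', hs'']
          _ = r * (s'' - w) := by rw [mul_sub]
      obtain ⟨q'', w₂, hq'q''⟩ := hinv q' hq'r
      refine ⟨q', ⟨w, hqq'⟩, ?_⟩
      have hA : q * q' * q'' - q'' = r * (w * q'') := by
        calc q * q' * q'' - q'' = (q * q' - 1) * q'' := by noncomm_ring
          _ = r * w * q'' := by rw [hqq']
          _ = r * (w * q'') := by rw [mul_assoc]
      obtain ⟨s₃, hs₃⟩ := hprop2 q w₂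
      have hB : q * q' * q'' - q = r * s₃ := by
        calc q * q' * q'' - q = q * (q' * q'' - 1) := by noncomm_ring
          _ = q * (r * w₂) := by rw [hq'q'']
          _ = r * s₃ := hs₃
      have hqmq : q - q'' = r * (w * q'' - s₃) := by
        calc q - q'' = (q * q' * q'' - q'') - (q * q' * q'' - q) := by abel
          _ = r * (w * q'') - r * s₃ := by rw [hA, hB]
          _ = r * (w * q'' - s₃) := by rw [mul_sub]
      obtain ⟨s₄, hs₄⟩ := hprop2 q' (w * q'' - s₃)
      refine ⟨s₄ + w₂, ?_⟩
      calc q' * q - 1 = q' * (q - q'') + (q' * q'' - 1) := by noncomm_ring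
        _ = q' * (r * (w * q'' - s₃)) + r * w₂ := by rw [hqmq, hq'q'']
        _ = r * s₄ + r * w₂ := by rw [hs₄]
        _ = r * (s₄ + w₂) := by rw [mul_add]
    exact ⟨r, hirr, hIeq, ⟨hone, hprop2, hfull⟩, hrI⟩
end

section
/- Let (M,v) be a K-trivially valued, C-minimal, infinite R-module. If there exists a ∈ M with v(a) < θ (i.e., v(a.t) < v(a)), then M is divisible. -/
open FirstOrder Language Set

universe u v w x y

section AuxStmt11

variable {M₁ : Type w} [AddCommGroup M₁] {Δ₁ : Type x} [LinearOrder Δ₁]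

/-- Auxiliary: quantifier-free `cLang`-formulas with parameters `c` have constant truth
value on elements of valuation below `γ`, provided `γ` is below the valuations of all
parameters and of all their differences. -/
lemma qf_inv_aux (v : M₁ → Δ₁) (infty : Δ₁) (hle : ∀ γ : Δ₁, γ ≤ infty) (hv0 : v 0 = infty)
    (vsub_left : ∀ z y : M₁, v z < v y → v (z - y) = v z)
    (vsub_right : ∀ z y : M₁, v z < v y → v (y - z) = v z)
    {k : ℕ} (c : Fin k → M₁) (γ : Δ₁)
    (hc1 : ∀ i, γ < v (c i)) (hc2 : ∀ i j, γ < v (c i - c j))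
    {x y : M₁} (hx : v x < γ) (hy : v y < γ)
    {φf : cLang.BoundedFormula (Fin k ⊕ Fin 1) 0} (hφ : φf.IsQF) :
    ∀ xs : Fin 0 → M₁,
      (@BoundedFormula.Realize cLang M₁ (cRelStructure M₁ (Crel v)) _ 0 φf
          (Sum.elim c fun _ => x) xs ↔
        @BoundedFormula.Realize cLang M₁ (cRelStructure M₁ (Crel v)) _ 0 φf
          (Sum.elim c fun _ => y) xs) := by
  letI : cLang.Structure M₁ := cRelStructure M₁ (Crel v)
  have hzinf : ∀ z : M₁, v z < γ → v z < infty := fun z hz => lt_of_lt_of_le hz (hle γ)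
  have hAfar : ∀ z : M₁, v z < γ → ∀ i : Fin k, v (z - c i) = v z :=
    fun z hz i => vsub_left z (c i) (hz.trans (hc1 i))
  have hBfar : ∀ z : M₁, v z < γ → ∀ i : Fin k, v (c i - z) = v z :=
    fun z hz i => vsub_right z (c i) (hz.trans (hc1 i))
  have caseA : ∀ z : M₁, v z < γ → ∀ i j, Crel v z (c i) (c j) := by
    intro z hz i j
    refine ⟨(hAfar z hz i).trans (hAfar z hz j).symm, ?_⟩
    rw [hAfar z hz j]; exact hz.trans (hc2 i j)
  have caseB : ∀ z : M₁, v z < γ → ∀ i j, ¬ Crel v (c i) z (c j) := by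
    rintro z hz i j ⟨-, h2⟩
    rw [hAfar z hz j] at h2
    exact lt_irrefl _ (h2.trans (hz.trans (hc2 i j)))
  have caseC : ∀ z : M₁, v z < γ → ∀ i j, ¬ Crel v (c i) (c j) z := by
    rintro z hz i j ⟨-, h2⟩
    rw [hBfar z hz i, hBfar z hz j] at h2
    exact lt_irrefl _ h2
  have caseD : ∀ z : M₁, v z < γ → ∀ i, ¬ Crel v z z (c i) := by
    rintro z hz i ⟨-, h2⟩; exact lt_irrefl _ h2
  have caseE : ∀ z : M₁, v z < γ → ∀ i, ¬ Crel v z (c i) z := by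
    rintro z hz i ⟨h1, -⟩
    rw [sub_self, hv0, hAfar z hz i] at h1
    exact absurd h1 (ne_of_lt (hzinf z hz))
  have caseF : ∀ z : M₁, v z < γ → ∀ i, Crel v (c i) z z := by
    intro z hz i
    refine ⟨rfl, ?_⟩
    rw [sub_self, hv0, hBfar z hz i]
    exact hzinf z hz
  have caseG : ∀ z : M₁, v z < γ → ¬ Crel v z z z := by
    rintro z hz ⟨-, h2⟩; exact lt_irrefl _ h2
  have hcx : ∀ i : Fin k, c i ≠ x := fun i h => absurd (h ▸ hc1 i) (not_lt.2 hx.le)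
  have hcy : ∀ i : Fin k, c i ≠ y := fun i h => absurd (h ▸ hc1 i) (not_lt.2 hy.le)
  have tv : ∀ (xs : Fin 0 → M₁) (T : cLang.Term ((Fin k ⊕ Fin 1) ⊕ Fin 0)),
      (∃ j : Fin k, ∀ z : M₁,
        T.realize (Sum.elim (Sum.elim c fun _ => z) xs) = c j) ∨
      (∀ z : M₁, T.realize (Sum.elim (Sum.elim c fun _ => z) xs) = z) := by
    intro xs T
    cases T with
    | var i =>
      rcases i with (j | o) | f0
      · exact Or.inl ⟨j, fun z => rfl⟩
      · exact Or.inr fun z => rfl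
      · exact f0.elim0
    | func f ts => exact PEmpty.elim f
  induction hφ with
  | falsum => exact fun xs => Iff.rfl
  | @imp φ₁ φ₂ h₁ h₂ ih₁ ih₂ =>
    intro xs
    simp only [BoundedFormula.realize_imp]
    exact imp_congr (ih₁ xs) (ih₂ xs)
  | @of_isAtomic φ h =>
    intro xs
    cases h with
    | equal t₁ t₂ =>
      simp only [BoundedFormula.realize_bdEqual]
      rcases tv xs t₁ with ⟨i, h1⟩ | h1
      · rcases tv xs t₂ with ⟨j, h2⟩ | h2
        · rw [h1 x, h1 y, h2 x, h2 y]
        · rw [h1 x, h1 y, h2 x, h2 y]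
          exact iff_of_false (hcx i) (hcy i)
      · rcases tv xs t₂ with ⟨j, h2⟩ | h2
        · rw [h1 x, h1 y, h2 x, h2 y]
          exact iff_of_false (fun h => hcx j h.symm) (fun h => hcy j h.symm)
        · rw [h1 x, h1 y, h2 x, h2 y]
          exact iff_of_true rfl rfl
    | @rel l Rl ts =>
      rcases l with _ | _ | _ | _ | l
      · exact PEmpty.elim Rl
      · exact PEmpty.elim Rl
      · exact PEmpty.elim Rl
      · -- arity 3 : the `C`-relation
        have hRm : ∀ m : Fin 3 → M₁,
            (Structure.RelMap (M := M₁) Rl m ↔ Crel v (m 0) (m 1) (m 2)) :=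
          fun m => Iff.rfl
        simp only [BoundedFormula.realize_rel, hRm]
        rcases tv xs (ts 0) with ⟨i0, h0⟩ | h0
        · rcases tv xs (ts 1) with ⟨i1, h1⟩ | h1
          · rcases tv xs (ts 2) with ⟨i2, h2⟩ | h2
            · rw [h0 x, h0 y, h1 x, h1 y, h2 x, h2 y]
            · rw [h0 x, h0 y, h1 x, h1 y, h2 x, h2 y]
              exact iff_of_false (caseC x hx i0 i1) (caseC y hy i0 i1)
          · rcases tv xs (ts 2) with ⟨i2, h2⟩ | h2
            · rw [h0 x, h0 y, h1 x, h1 y, h2 x, h2 y]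
              exact iff_of_false (caseB x hx i0 i2) (caseB y hy i0 i2)
            · rw [h0 x, h0 y, h1 x, h1 y, h2 x, h2 y]
              exact iff_of_true (caseF x hx i0) (caseF y hy i0)
        · rcases tv xs (ts 1) with ⟨i1, h1⟩ | h1
          · rcases tv xs (ts 2) with ⟨i2, h2⟩ | h2
            · rw [h0 x, h0 y, h1 x, h1 y, h2 x, h2 y]
              exact iff_of_true (caseA x hx i1 i2) (caseA y hy i1 i2)
            · rw [h0 x, h0 y, h1 x, h1 y, h2 x, h2 y]
              exact iff_of_false (caseE x hx i1) (caseE y hy i1)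
          · rcases tv xs (ts 2) with ⟨i2, h2⟩ | h2
            · rw [h0 x, h0 y, h1 x, h1 y, h2 x, h2 y]
              exact iff_of_false (caseD x hx i2) (caseD y hy i2)
            · rw [h0 x, h0 y, h1 x, h1 y, h2 x, h2 y]
              exact iff_of_false (caseG x hx) (caseG y hy)
      · exact PEmpty.elim Rl

end AuxStmt11

/-- a `K`-trivially valued, `C`-minimal, infinite `R`-module containing
an element of valuation `< θ` is divisible. -/
theorem stmt_11 (K : Type u) [Field K] (φ : K →+* K) (R : Type v) [Ring R]
    (ι : K →+* R) (t : R) (hR : IsSkewPolyRing K φ R ι t)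
    (M : Type w) [AddCommGroup M] [Module Rᵐᵒᵖ M]
    (Δ : Type x) [LinearOrder Δ] (infty : Δ) (act : Δ → R → Δ) (v : M → Δ)
    (hV : IsValuedRMod K φ R ι t M Δ infty act v)
    (hinf : Infinite M)
    (hKtriv : KTriviallyValued ι v)
    (hcmin : @CMinimal (cModLang R) PUnit.unit M (cModStructure R M (Crel v)))
    (a : M) (ha : v (rsmul a t) < v a) :
    RDivisible R M := by
  classical
  letI instM : (cModLang R).Structure M := cModStructure R M (Crel v)
  -- basic valuation facts
  have hle := hV.le_infty
  have hv0 : v (0 : M) = infty := (hV.v_eq_infty_iff 0).2 rfl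
  have vneg : ∀ z : M, v (-z) = v z := by
    intro z
    have h1 : min (v (0 : M)) (v z) ≤ v (0 - z) := hV.v_sub 0 z
    have h2 : min (v (0 : M)) (v (-z)) ≤ v (0 - -z) := hV.v_sub 0 (-z)
    rw [zero_sub] at h1
    rw [zero_sub, neg_neg] at h2
    rw [hv0, min_eq_right (hle (v z))] at h1
    rw [hv0, min_eq_right (hle (v (-z)))] at h2
    exact le_antisymm h2 h1
  have vadd_min : ∀ z y : M, min (v z) (v y) ≤ v (z + y) := by
    intro z y
    have h := hV.v_sub z (-y)
    rwa [sub_neg_eq_add, vneg y] at h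
  have vadd_left : ∀ z y : M, v z < v y → v (z + y) = v z := by
    intro z y h
    have hge : v z ≤ v (z + y) := by
      have := vadd_min z y
      rwa [min_eq_left h.le] at this
    have h2 : min (v (z + y)) (v y) ≤ v z := by
      have := hV.v_sub (z + y) y
      rwa [add_sub_cancel_right] at this
    rcases min_le_iff.1 h2 with h3 | h3
    · exact le_antisymm h3 hge
    · exact absurd h3 (not_le.2 h)
  have vsub_left : ∀ z y : M, v z < v y → v (z - y) = v z := by
    intro z y h
    rw [sub_eq_add_neg]
    exact vadd_left z (-y) (by rwa [vneg])
  have vsub_right : ∀ z y : M, v z < v y → v (y - z) = v z := by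
    intro z y h
    rw [← vneg (y - z), neg_sub]
    exact vsub_left z y h
  -- the element below θ
  have haneq : a ≠ 0 := by
    intro h
    rw [h] at ha
    simp only [rsmul, smul_zero] at ha
    exact lt_irrefl _ ha
  have hγ0inf : v a ≠ infty := fun h => haneq ((hV.v_eq_infty_iff a).1 h)
  have hθ : act (v a) t < v a := by
    rw [← hV.v_smul_t a]; exact ha
  have e1 : t ^ 1 * ι (1 : K) = t := by simp
  have e0 : t ^ 0 * ι (1 : K) = 1 := by simp
  have dec : ∀ δ : Δ, δ < v a → act δ t < δ := by
    intro δ hδ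
    have h := hV.act_monomial_lt 1 0 1 1 one_ne_zero one_ne_zero Nat.zero_lt_one (v a) hγ0inf
      (by rw [e1, e0, hV.act_one]; exact hθ.le) δ hδ
    rwa [e1, e0, hV.act_one] at h
  have no_min : ∀ γ : Δ, ∃ δ : Δ, δ < γ := by
    intro γ
    rcases lt_trichotomy γ (v a) with h | h | h
    · exact ⟨act γ t, dec γ h⟩
    · exact ⟨act γ t, by rw [h]; exact hθ⟩
    · exact ⟨v a, h⟩
  have exists_small : ∀ γ : Δ, ∃ z : M, v z < γ := by
    intro γ
    obtain ⟨δ, hδ⟩ := no_min γ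
    obtain ⟨z, hz⟩ := hV.v_surjective δ
    exact ⟨z, hz ▸ hδ⟩
  have vsum : ∀ (s : Finset ℕ) (g : ℕ → M) (δ : Δ), δ < infty →
      (∀ i ∈ s, δ < v (g i)) → δ < v (∑ i ∈ s, g i) := by
    intro s
    induction s using Finset.induction_on with
    | empty => intro g δ hδ _; rw [Finset.sum_empty, hv0]; exact hδ
    | insert i s hnot ih =>
      intro g δ hδ hall
      rw [Finset.sum_insert hnot]
      exact lt_of_lt_of_le
        (lt_min (hall _ (Finset.mem_insert_self _ _))
          (ih g δ hδ fun i hi => hall i (Finset.mem_insert_of_mem hi)))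
        (vadd_min _ _)
  -- main argument
  intro r hr y0
  set D : Set M := {z : M | ∃ w : M, rsmul w r = z} with hDdef
  have hdef : Set.Definable₁ (univ : Set M) (cModLang R) D := by
    have h0 : (∅ : Set M).Definable (cModLang R) {x : Fin 1 → M | x 0 ∈ D} := by
      rw [Set.empty_definable_iff]
      refine ⟨BoundedFormula.ex
        ((Term.func (L := cModLang R) (l := 1) (Option.some r)
            (fun _ => Term.var (Sum.inr (0 : Fin 1)))).bdEqual
          (Term.var (Sum.inl (0 : Fin 1)))), ?_⟩
      ext z
      simp only [mem_setOf_eq, Formula.Realize, BoundedFormula.realize_ex,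
        BoundedFormula.realize_bdEqual, Term.realize, Sum.elim_inl, Sum.elim_inr]
      constructor
      · rintro ⟨w, hw⟩
        exact ⟨w, hw⟩
      · rintro ⟨w, hw⟩
        exact ⟨w, hw⟩
    exact Set.Definable.mono h0 (Set.empty_subset _)
  have hqfc := hcmin M rfl D hdef
  have hCeq : (fun a b d : M =>
      Structure.RelMap (L := cModLang R) (M := M) (n := 3) PUnit.unit ![a, b, d]) = Crel v := rfl
  rw [hCeq] at hqfc
  obtain ⟨k, φf, cpar, hqf, hD⟩ := hqfc
  -- choice of γ
  set S : Finset Δ := insert (v a)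
    ((Finset.univ.image fun p : Fin k × Fin k => v (cpar p.1 - cpar p.2)) ∪
      (Finset.univ.image fun i : Fin k => v (cpar i))) with hSdef
  have hSne : S.Nonempty := ⟨v a, Finset.mem_insert_self _ _⟩
  obtain ⟨γ, hγ⟩ := no_min (S.min' hSne)
  have hγall : ∀ s ∈ S, γ < s := fun s hs => lt_of_lt_of_le hγ (Finset.min'_le S s hs)
  have hγγ0 : γ < v a := hγall _ (Finset.mem_insert_self _ _)
  have hc1 : ∀ i, γ < v (cpar i) := fun i =>
    hγall _ (Finset.mem_insert_of_mem (Finset.mem_union_right _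
      (Finset.mem_image.2 ⟨i, Finset.mem_univ _, rfl⟩)))
  have hc2 : ∀ i j, γ < v (cpar i - cpar j) := fun i j =>
    hγall _ (Finset.mem_insert_of_mem (Finset.mem_union_left _
      (Finset.mem_image.2 ⟨(i, j), Finset.mem_univ _, rfl⟩)))
  -- membership in D is constant on {z | v z < γ}
  have key : ∀ z w : M, v z < γ → v w < γ → (z ∈ D ↔ w ∈ D) := by
    intro z w hz hw
    rw [hD]
    exact qf_inv_aux v infty hle hv0 vsub_left vsub_right cpar γ hc1 hc2 hz hw hqf default
  -- a small element of D
  obtain ⟨x0, hx0⟩ := exists_small γ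
  obtain ⟨c, hcr, -⟩ := hR.unique_rep r
  have hcne : c ≠ 0 := by
    rintro rfl
    rw [Finsupp.sum_zero_index] at hcr
    exact hr hcr
  have hsupp : c.support.Nonempty := Finsupp.support_nonempty_iff.2 hcne
  set d := c.support.max' hsupp with hd
  set f : ℕ → Δ := fun n => v (rsmul x0 (t ^ n)) with hf
  have hf0 : f 0 = v x0 := by
    simp only [hf, rsmul, pow_zero, MulOpposite.op_one, one_smul]
  have hstep : ∀ n, rsmul x0 (t ^ (n + 1)) = rsmul (rsmul x0 (t ^ n)) t := by
    intro n
    simp only [rsmul, pow_succ, MulOpposite.op_mul, mul_smul]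
  have hact : ∀ n, f (n + 1) = act (f n) t := by
    intro n
    simp only [hf]
    rw [hstep n, hV.v_smul_t]
  have hfdec : ∀ n, f n < v a ∧ f (n + 1) < f n := by
    intro n
    induction n with
    | zero =>
      have h0 : f 0 < v a := by rw [hf0]; exact hx0.trans hγγ0
      exact ⟨h0, by rw [hact 0]; exact dec _ h0⟩
    | succ n ih =>
      have h1 : f (n + 1) < v a := ih.2.trans ih.1
      exact ⟨h1, by rw [hact (n + 1)]; exact dec _ h1⟩
  have hanti : StrictAnti f := strictAnti_nat_of_succ_lt fun n => (hfdec n).2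
  set g : ℕ → M := fun i => rsmul x0 (t ^ i * ι (c i)) with hg
  have hvg : ∀ i ∈ c.support, v (g i) = f i := by
    intro i hi
    have hgi : g i = rsmul (rsmul x0 (t ^ i)) (ι (c i)) := by
      simp only [hg, rsmul, MulOpposite.op_mul, mul_smul]
    rw [hgi, hKtriv _ _ (Finsupp.mem_support_iff.1 hi)]
  have hsum : rsmul x0 r = ∑ i ∈ c.support, g i := by
    conv_lhs => rw [hcr]
    rw [Finsupp.sum]
    simp only [rsmul, Finset.op_sum, Finset.sum_smul]
    rfl
  have hfdinf : f d < infty := lt_of_lt_of_le (hfdec d).1 (hle (v a))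
  have hBlt : f d < v (∑ i ∈ c.support.erase d, g i) := by
    apply vsum _ _ _ hfdinf
    intro i hi
    have hid : i ∈ c.support := Finset.mem_of_mem_erase hi
    have hlt : i < d := lt_of_le_of_ne (Finset.le_max' _ i hid) (Finset.ne_of_mem_erase hi)
    rw [hvg i hid]
    exact hanti hlt
  have hsplit : rsmul x0 r = g d + ∑ i ∈ c.support.erase d, g i := by
    rw [hsum, Finset.add_sum_erase _ g (Finset.max'_mem _ hsupp)]
  have hvr : v (rsmul x0 r) = f d := by
    rw [hsplit, vadd_left _ _ (by rw [hvg d (Finset.max'_mem _ hsupp)]; exact hBlt),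
      hvg d (Finset.max'_mem _ hsupp)]
  have hvrγ : v (rsmul x0 r) < γ := by
    rw [hvr]
    exact lt_of_le_of_lt (hanti.antitone (Nat.zero_le d)) (by rw [hf0]; exact hx0)
  have hmem : rsmul x0 r ∈ D := ⟨x0, rfl⟩
  have hball : ∀ z : M, v z < γ → z ∈ D := fun z hz => (key z _ hz hvrγ).2 hmem
  -- conclusion
  by_cases hy : v y0 < γ
  · exact hball y0 hy
  · push_neg at hy
    obtain ⟨w, hw⟩ := exists_small γ
    have h1 : w ∈ D := hball w hw
    have h2 : y0 - w ∈ D := hball _ (by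
      rw [vsub_right w y0 (lt_of_lt_of_le hw hy)]; exact hw)
    obtain ⟨u, hu⟩ := h1
    obtain ⟨u', hu'⟩ := h2
    refine ⟨u + u', ?_⟩
    have hadd : rsmul (u + u') r = rsmul u r + rsmul u' r := smul_add _ _ _
    rw [hadd, hu, hu']
    abel
end

section
/- Let (M,v) be a non-trivially valued R-module which is K-trivially valued and C-minimal. Then for every nonzero r ∈ R, the annihilator ann_M(r) is finite. -/
open FirstOrder Language Set

universe u v w x y

/-! ## Auxiliary lemmas for Statement 12 -/

namespace Stmt12Aux

set_option linter.unusedSectionVars false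

section ValLemmas

variable {M : Type w} [AddCommGroup M] {Δ : Type x} [LinearOrder Δ]
variable {v : M → Δ} {infty : Δ}

lemma v_zero (hinf : ∀ z : M, v z = infty ↔ z = 0) : v (0 : M) = infty := (hinf 0).2 rfl

lemma v_ne_infty (hinf : ∀ z : M, v z = infty ↔ z = 0) {z : M} (hz : z ≠ 0) :
    v z ≠ infty := fun h => hz ((hinf z).1 h)

lemma v_neg (hinf : ∀ z : M, v z = infty ↔ z = 0) (hle : ∀ γ : Δ, γ ≤ infty)
    (hsub : ∀ z y : M, min (v z) (v y) ≤ v (z - y)) (z : M) : v (-z) = v z := by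
  have h1 : v z ≤ v (-z) := by
    have := hsub 0 z
    rwa [v_zero hinf, zero_sub, min_eq_right (hle (v z))] at this
  have h2 : v (-z) ≤ v z := by
    have := hsub 0 (-z)
    rwa [v_zero hinf, zero_sub, neg_neg, min_eq_right (hle (v (-z)))] at this
  exact le_antisymm h2 h1

lemma v_sub_ge (hsub : ∀ z y : M, min (v z) (v y) ≤ v (z - y)) (a b : M) :
    min (v a) (v b) ≤ v (a - b) := hsub a b

lemma v_add_ge (hinf : ∀ z : M, v z = infty ↔ z = 0) (hle : ∀ γ : Δ, γ ≤ infty)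
    (hsub : ∀ z y : M, min (v z) (v y) ≤ v (z - y)) (a b : M) :
    min (v a) (v b) ≤ v (a + b) := by
  have := hsub a (-b)
  rwa [sub_neg_eq_add, v_neg hinf hle hsub] at this

/-- If `v a < v b` then `v (a + b) = v a`. -/
lemma v_add_eq (hinf : ∀ z : M, v z = infty ↔ z = 0) (hle : ∀ γ : Δ, γ ≤ infty)
    (hsub : ∀ z y : M, min (v z) (v y) ≤ v (z - y)) {a b : M} (h : v a < v b) :
    v (a + b) = v a := by
  have h1 : v a ≤ v (a + b) := le_trans (le_of_eq (min_eq_left h.le).symm)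
    (v_add_ge hinf hle hsub a b)
  have h2 : v (a + b) ≤ v a := by
    have h3 := hsub (a + b) b
    rw [add_sub_cancel_right] at h3
    rcases le_total (v (a + b)) (v b) with hc | hc
    · rwa [min_eq_left hc] at h3
    · rw [min_eq_right hc] at h3
      exact absurd (lt_of_lt_of_le h h3) (lt_irrefl _)
  exact le_antisymm h2 h1

lemma v_sub_eq_left (hinf : ∀ z : M, v z = infty ↔ z = 0) (hle : ∀ γ : Δ, γ ≤ infty)
    (hsub : ∀ z y : M, min (v z) (v y) ≤ v (z - y)) {a b : M} (h : v a < v b) :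
    v (a - b) = v a := by
  rw [sub_eq_add_neg]
  exact v_add_eq hinf hle hsub (by rwa [v_neg hinf hle hsub])

lemma v_sub_eq_right (hinf : ∀ z : M, v z = infty ↔ z = 0) (hle : ∀ γ : Δ, γ ≤ infty)
    (hsub : ∀ z y : M, min (v z) (v y) ≤ v (z - y)) {a b : M} (h : v b < v a) :
    v (a - b) = v b := by
  have : v (b - a) = v b := v_sub_eq_left hinf hle hsub h
  rw [← v_neg hinf hle hsub (a - b), neg_sub]
  exact this

lemma v_eq_iff_sub (hinf : ∀ z : M, v z = infty ↔ z = 0) (a b : M) :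
    a = b ↔ v (a - b) = infty := by
  rw [hinf (a - b), sub_eq_zero]

/-- A finite sum of elements of valuation `> b` has valuation `> b`. -/
lemma v_sum_gt (hinf : ∀ z : M, v z = infty ↔ z = 0) (hle : ∀ γ : Δ, γ ≤ infty)
    (hsub : ∀ z y : M, min (v z) (v y) ≤ v (z - y)) {ι' : Type*} (S : Finset ι')
    (z : ι' → M) {b : Δ} (hb : b ≠ infty) (h : ∀ i ∈ S, b < v (z i)) :
    b < v (∑ i ∈ S, z i) := by
  classical
  induction S using Finset.induction_on with
  | empty =>
    rw [Finset.sum_empty, v_zero hinf]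
    exact lt_of_le_of_ne (hle b) hb
  | insert _ _ hnotmem ih =>
    rename_i i S'
    rw [Finset.sum_insert hnotmem]
    have h1 : b < v (z i) := h i (Finset.mem_insert_self i S')
    have h2 : b < v (∑ j ∈ S', z j) := ih fun j hj => h j (Finset.mem_insert_of_mem hj)
    calc b < min (v (z i)) (v (∑ j ∈ S', z j)) := lt_min h1 h2
    _ ≤ v (z i + ∑ j ∈ S', z j) := v_add_ge hinf hle hsub _ _

/-- If a sum has a unique strict minimum among the valuations of its terms then its
valuation equals that minimum. -/
lemma v_sum_eq_min (hinf : ∀ z : M, v z = infty ↔ z = 0) (hle : ∀ γ : Δ, γ ≤ infty)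
    (hsub : ∀ z y : M, min (v z) (v y) ≤ v (z - y)) {ι' : Type*} [DecidableEq ι']
    (S : Finset ι') (z : ι' → M) {i₀ : ι'} (hi₀ : i₀ ∈ S) (hne : v (z i₀) ≠ infty)
    (h : ∀ i ∈ S, i ≠ i₀ → v (z i₀) < v (z i)) :
    v (∑ i ∈ S, z i) = v (z i₀) := by
  rw [← Finset.add_sum_erase S z hi₀]
  have h2 : v (z i₀) < v (∑ i ∈ S.erase i₀, z i) := by
    refine v_sum_gt hinf hle hsub _ _ hne fun i hi => ?_
    exact h i (Finset.mem_of_mem_erase hi) (Finset.ne_of_mem_erase hi)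
  exact v_add_eq hinf hle hsub h2

end ValLemmas

section RsmulLemmas

variable {R : Type v} [Ring R] {M : Type w} [AddCommGroup M] [Module Rᵐᵒᵖ M]

lemma rsmul_one (x : M) : rsmul x (1 : R) = x := by
  rw [rsmul, MulOpposite.op_one, one_smul]

lemma rsmul_mul (x : M) (p q : R) : rsmul x (p * q) = rsmul (rsmul x p) q := by
  rw [rsmul, rsmul, rsmul, MulOpposite.op_mul, mul_smul]

lemma zero_rsmul (r : R) : rsmul (0 : M) r = 0 := smul_zero _

lemma rsmul_sub (x y : M) (r : R) : rsmul (x - y) r = rsmul x r - rsmul y r :=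
  smul_sub _ _ _

lemma rsmul_finsupp_sum {ι' : Type*} {K' : Type*} [Zero K'] (x : M) (c : ι' →₀ K')
    (g : ι' → K' → R) :
    rsmul x (c.sum g) = ∑ i ∈ c.support, rsmul x (g i (c i)) := by
  rw [Finsupp.sum, rsmul, Finset.op_sum, Finset.sum_smul]

end RsmulLemmas

section ThetaLemmas

variable {K : Type u} [Field K] {φ : K →+* K} {R : Type v} [Ring R]
variable {ι : K →+* R} {t : R} {M : Type w} [AddCommGroup M] [Module Rᵐᵒᵖ M]
variable {Δ : Type x} [LinearOrder Δ] {infty : Δ} {act : Δ → R → Δ} {v : M → Δ}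
variable (hV : IsValuedRMod K φ R ι t M Δ infty act v)

include hV

/-- Iterates of the action of `t` on a non-`infty` element stay away from `infty`. -/
lemma iter_ne_infty {γ : Δ} (hγ : γ ≠ infty) (n : ℕ) :
    (fun δ => act δ t)^[n] γ ≠ infty := by
  induction n with
  | zero => exact hγ
  | succ n ih =>
    rw [Function.iterate_succ_apply']
    exact hV.act_t_ne_infty _ ih

/-- Valuation of `x.(tⁱ)`. -/
lemma v_rsmul_tpow (x : M) (i : ℕ) :
    v (rsmul x (t ^ i)) = (fun δ => act δ t)^[i] (v x) := by
  induction i with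
  | zero => rw [pow_zero, Stmt12Aux.rsmul_one, Function.iterate_zero_apply]
  | succ n ih =>
    rw [pow_succ, Stmt12Aux.rsmul_mul, Function.iterate_succ_apply', hV.v_smul_t, ih]

/-- Valuation of a monomial `x.(tⁱa)` in the `K`-trivial case. -/
lemma v_rsmul_monomial (hKtriv : KTriviallyValued ι v) (x : M) (i : ℕ) {a : K}
    (ha : a ≠ 0) :
    v (rsmul x (t ^ i * ι a)) = (fun δ => act δ t)^[i] (v x) := by
  rw [Stmt12Aux.rsmul_mul, hKtriv _ a ha, v_rsmul_tpow hV]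

/-- The one-fixed-point contraction lemma: if `μ` is fixed by the action of `t`, then
the action of `t` contracts strictly below `μ`. -/
lemma theta_contract {μ : Δ} (hfix : act μ t = μ) (hμ : μ ≠ infty) {δ : Δ}
    (hδ : δ < μ) : act δ t < δ := by
  have e1 : t ^ 1 * ι (1 : K) = t := by rw [pow_one, map_one, mul_one]
  have e0 : t ^ 0 * ι (1 : K) = 1 := by rw [pow_zero, map_one, mul_one]
  have h1 : act μ (t ^ 1 * ι (1 : K)) ≤ act μ (t ^ 0 * ι (1 : K)) := by
    rw [e1, e0, hV.act_one, hfix]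
  have := hV.act_monomial_lt 1 0 1 1 one_ne_zero one_ne_zero zero_lt_one μ hμ h1 δ hδ
  rwa [e1, e0, hV.act_one] at this

/-- Expansion above a fixed point. -/
lemma theta_expand {μ : Δ} (hfix : act μ t = μ) {δ : Δ} (hδgt : μ < δ)
    (hδ : δ ≠ infty) : δ < act δ t := by
  by_contra h
  push_neg at h
  have e1 : t ^ 1 * ι (1 : K) = t := by rw [pow_one, map_one, mul_one]
  have e0 : t ^ 0 * ι (1 : K) = 1 := by rw [pow_zero, map_one, mul_one]
  have h1 : act δ (t ^ 1 * ι (1 : K)) ≤ act δ (t ^ 0 * ι (1 : K)) := by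
    rw [e1, e0, hV.act_one]; exact h
  have := hV.act_monomial_lt 1 0 1 1 one_ne_zero one_ne_zero zero_lt_one δ hδ h1 μ hδgt
  rw [e1, e0, hV.act_one, hfix] at this
  exact absurd this (lt_irrefl μ)

/-- Uniqueness of fixed points of the action of `t`. -/
lemma fix_unique {μ₁ μ₂ : Δ} (h1 : act μ₁ t = μ₁) (hμ₁ : μ₁ ≠ infty)
    (h2 : act μ₂ t = μ₂) (hμ₂ : μ₂ ≠ infty) : μ₁ = μ₂ := by
  rcases lt_trichotomy μ₁ μ₂ with h | h | h
  · have := theta_contract hV h2 hμ₂ h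
    rw [h1] at this
    exact absurd this (lt_irrefl μ₁)
  · exact h
  · have := theta_contract hV h1 hμ₁ h
    rw [h2] at this
    exact absurd this (lt_irrefl μ₂)

/-- Below a fixed point, the orbit of the action of `t` stays below it. -/
lemma orbit_stays_below {μ : Δ} (hfix : act μ t = μ) (hμ : μ ≠ infty) {δ : Δ}
    (hδ : δ < μ) (n : ℕ) : (fun δ => act δ t)^[n] δ < μ := by
  induction n with
  | zero => exact hδ
  | succ n ih =>
    rw [Function.iterate_succ_apply']
    exact lt_trans (theta_contract hV hfix hμ ih) ih

/-- Below a fixed point, the orbit is strictly decreasing. -/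
lemma orbit_strictAnti {μ : Δ} (hfix : act μ t = μ) (hμ : μ ≠ infty) {δ : Δ}
    (hδ : δ < μ) : StrictAnti fun n => (fun δ => act δ t)^[n] δ := by
  refine strictAnti_nat_of_succ_lt fun n => ?_
  rw [Function.iterate_succ_apply']
  exact theta_contract hV hfix hμ (orbit_stays_below hV hfix hμ hδ n)

end ThetaLemmas

section QFLemmas

variable {M : Type w} [AddCommGroup M] {Δ : Type x} [LinearOrder Δ]
variable {v : M → Δ} {infty : Δ}

lemma term_is_var {α : Type*} (τ : cLang.Term α) : ∃ s, τ = Term.var s := by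
  cases τ with
  | var s => exact ⟨s, rfl⟩
  | func f ts => exact PEmpty.elim f

/-- Realization of quantifier-free `cLang`-formulas only depends on the valuations of
the differences of the assigned elements. -/
lemma qf_inv_aux (C : M → M → M → Prop)
    (hC : ∀ {a b c a' b' c' : M}, v (a - b) = v (a' - b') → v (a - c) = v (a' - c') →
      v (b - c) = v (b' - c') → (C a b c ↔ C a' b' c'))
    (hinf : ∀ z : M, v z = infty ↔ z = 0)
    {α : Type y} {n : ℕ} {ψ : cLang.BoundedFormula α n} (hψ : ψ.IsQF)
    (g g' : α → M) (xs xs' : Fin n → M)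
    (H : ∀ s s' : α ⊕ Fin n,
      v (Sum.elim g xs s - Sum.elim g xs s') = v (Sum.elim g' xs' s - Sum.elim g' xs' s')) :
    (@BoundedFormula.Realize cLang M (cRelStructure M C) α n ψ g xs ↔
      @BoundedFormula.Realize cLang M (cRelStructure M C) α n ψ g' xs') := by
  letI := cRelStructure M C
  induction hψ with
  | falsum => exact Iff.rfl
  | imp h1 h2 ih1 ih2 => exact imp_congr ih1 ih2
  | of_isAtomic h =>
    cases h with
    | equal t₁ t₂ =>
      obtain ⟨s₁, rfl⟩ := term_is_var t₁
      obtain ⟨s₂, rfl⟩ := term_is_var t₂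
      rw [BoundedFormula.realize_bdEqual, BoundedFormula.realize_bdEqual,
        Term.realize_var, Term.realize_var, Term.realize_var, Term.realize_var,
        v_eq_iff_sub hinf (Sum.elim g xs s₁), v_eq_iff_sub hinf (Sum.elim g' xs' s₁),
        H s₁ s₂]
    | rel Rl ts =>
      rename_i l
      match l, Rl, ts with
      | 0, Rl, _ => exact PEmpty.elim Rl
      | 1, Rl, _ => exact PEmpty.elim Rl
      | 2, Rl, _ => exact PEmpty.elim Rl
      | (m + 4), Rl, _ => exact PEmpty.elim Rl
      | 3, _, ts =>
        obtain ⟨s₀, h₀⟩ := term_is_var (ts 0)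
        obtain ⟨s₁, h₁⟩ := term_is_var (ts 1)
        obtain ⟨s₂, h₂⟩ := term_is_var (ts 2)
        rw [BoundedFormula.realize_rel, BoundedFormula.realize_rel]
        show C (Term.realize _ (ts 0)) (Term.realize _ (ts 1)) (Term.realize _ (ts 2)) ↔
          C (Term.realize _ (ts 0)) (Term.realize _ (ts 1)) (Term.realize _ (ts 2))
        rw [h₀, h₁, h₂, Term.realize_var, Term.realize_var, Term.realize_var,
          Term.realize_var, Term.realize_var, Term.realize_var]
        exact hC (H s₀ s₁) (H s₀ s₂) (H s₁ s₂)

/-- Key invariance: membership in a set defined by a quantifier-free `cLang`-formula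
with parameters `cs` only depends on the valuations `v (a - cs i)`. -/
lemma qf_inv (C : M → M → M → Prop)
    (hC : ∀ {a b c a' b' c' : M}, v (a - b) = v (a' - b') → v (a - c) = v (a' - c') →
      v (b - c) = v (b' - c') → (C a b c ↔ C a' b' c'))
    (hinf : ∀ z : M, v z = infty ↔ z = 0) (hle : ∀ γ : Δ, γ ≤ infty)
    (hsub : ∀ z y : M, min (v z) (v y) ≤ v (z - y))
    {k : ℕ} {ψ : cLang.Formula (Fin k ⊕ Fin 1)} (hψ : ψ.IsQF) (cs : Fin k → M)
    {a a' : M} (h : ∀ i, v (a - cs i) = v (a' - cs i)) :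
    (@Formula.Realize cLang M (cRelStructure M C) _ ψ (Sum.elim cs fun _ => a) ↔
      @Formula.Realize cLang M (cRelStructure M C) _ ψ (Sum.elim cs fun _ => a')) := by
  refine qf_inv_aux C hC hinf hψ _ _ default default ?_
  intro s s'
  rcases s with s | s
  · rcases s' with s' | s'
    · rcases s with i | i
      · rcases s' with j | j
        · rfl
        · show v (cs i - a) = v (cs i - a')
          rw [← neg_sub a (cs i), v_neg hinf hle hsub, h i, ← v_neg hinf hle hsub (a' - cs i),
            neg_sub]
      · rcases s' with j | j
        · exact h j
        · show v (a - a) = v (a' - a')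
          rw [sub_self, sub_self]
    · exact Fin.elim0 s'
  · exact Fin.elim0 s

end QFLemmas

section DefinableLemmas

variable {R : Type v} [Ring R] {M : Type w} [AddCommGroup M] [Module Rᵐᵒᵖ M]

/-- The formula `x.r = 0` in the language of `R`-modules. -/
def annFml (R : Type v) [Ring R] (r : R) : (cModLang R).Formula (Fin 1) :=
  Term.equal (Term.func (show (cModLang R).Functions 1 from some r) ![Term.var 0])
    (Term.func (show (cModLang R).Functions 0 from PUnit.unit) ![])

/-- The formula `∃ y, y.r = x` in the language of `R`-modules. -/
def imFml (R : Type v) [Ring R] (r : R) : (cModLang R).Formula (Fin 1) :=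
  BoundedFormula.ex (Term.bdEqual
    (Term.func (show (cModLang R).Functions 1 from some r) ![Term.var (Sum.inr 0)])
    (Term.var (Sum.inl 0)))

lemma realize_annFml (C : M → M → M → Prop) (r : R) (g : Fin 1 → M) :
    @Formula.Realize _ M (cModStructure R M C) _ (annFml R r) g ↔ rsmul (g 0) r = 0 :=
  Iff.rfl

lemma realize_imFml (C : M → M → M → Prop) (r : R) (g : Fin 1 → M) :
    @Formula.Realize _ M (cModStructure R M C) _ (imFml R r) g ↔
      ∃ b : M, rsmul b r = g 0 := by
  letI := cModStructure R M C
  have hsnoc : ∀ b : M, (Fin.snoc (default : Fin 0 → M) b : Fin 1 → M) = fun _ => b :=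
    fun b => funext fun i => by rw [Fin.eq_zero i]; exact Fin.snoc_last _ _
  rw [imFml, Formula.Realize, BoundedFormula.realize_ex]
  simp only [hsnoc]
  exact exists_congr fun b => Iff.rfl

lemma definable_ann (C : M → M → M → Prop) (r : R) :
    letI := cModStructure R M C
    Set.Definable₁ (univ : Set M) (cModLang R) {z : M | rsmul z r = 0} := by
  letI := cModStructure R M C
  refine Set.Definable.mono ((Set.empty_definable_iff).2 ⟨annFml R r, ?_⟩)
    (Set.empty_subset _)
  ext g
  exact (realize_annFml C r g).symm

lemma definable_im (C : M → M → M → Prop) (r : R) :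
    letI := cModStructure R M C
    Set.Definable₁ (univ : Set M) (cModLang R) {z : M | ∃ y : M, rsmul y r = z} := by
  letI := cModStructure R M C
  refine Set.Definable.mono ((Set.empty_definable_iff).2 ⟨imFml R r, ?_⟩)
    (Set.empty_subset _)
  ext g
  exact (realize_imFml C r g).symm

end DefinableLemmas

end Stmt12Aux

/-- a non-trivially valued, `K`-trivially valued, `C`-minimal `R`-module
has finite annihilators. -/
theorem stmt_12 (K : Type u) [Field K] (φ : K →+* K) (R : Type v) [Ring R]
    (ι : K →+* R) (t : R) (hR : IsSkewPolyRing K φ R ι t)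
    (M : Type w) [AddCommGroup M] [Module Rᵐᵒᵖ M]
    (Δ : Type x) [LinearOrder Δ] (infty : Δ) (act : Δ → R → Δ) (v : M → Δ)
    (hV : IsValuedRMod K φ R ι t M Δ infty act v)
    (hnontriv : ¬ TriviallyValued v)
    (hKtriv : KTriviallyValued ι v)
    (hcmin : @CMinimal (cModLang R) PUnit.unit M (cModStructure R M (Crel v))) :
    ∀ r : R, r ≠ 0 → {z : M | rsmul z r = 0}.Finite := by
  classical
  intro r hr
  by_contra hfin
  have hT : {z : M | rsmul z r = 0}.Infinite := hfin
  set T := {z : M | rsmul z r = 0} with hTdef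
  have hinf := hV.v_eq_infty_iff
  have hle := hV.le_infty
  have hsub := hV.v_sub
  -- subgroup facts about T
  have h0T : (0 : M) ∈ T := Stmt12Aux.zero_rsmul r
  have hTsub : ∀ {a b : M}, a ∈ T → b ∈ T → a - b ∈ T := by
    intro a b ha hb
    show rsmul (a - b) r = 0
    rw [Stmt12Aux.rsmul_sub, show rsmul a r = 0 from ha, show rsmul b r = 0 from hb,
      sub_zero]
  -- representation of r
  obtain ⟨c, hcrep⟩ := (hR.unique_rep r).exists
  have hcne : c ≠ 0 := by
    rintro rfl
    rw [Finsupp.sum_zero_index] at hcrep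
    exact hr hcrep
  have hsupp : c.support.Nonempty := Finsupp.support_nonempty_iff.2 hcne
  -- decomposition of the action of r into monomials
  have hdecomp : ∀ x : M, rsmul x r = ∑ i ∈ c.support, rsmul x (t ^ i * ι (c i)) := by
    intro x
    rw [hcrep]
    exact Stmt12Aux.rsmul_finsupp_sum x c _
  have hmono : ∀ (x : M) (i : ℕ), i ∈ c.support →
      v (rsmul x (t ^ i * ι (c i))) = (fun δ => act δ t)^[i] (v x) := fun x i hi =>
    Stmt12Aux.v_rsmul_monomial hV hKtriv x i (Finsupp.mem_support_iff.1 hi)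
  -- valuation of x.r when there is a strict minimum among monomial valuations
  have hvmin : ∀ (x : M) (i₀ : ℕ), i₀ ∈ c.support → x ≠ 0 →
      (∀ i ∈ c.support, i ≠ i₀ →
        (fun δ => act δ t)^[i₀] (v x) < (fun δ => act δ t)^[i] (v x)) →
      v (rsmul x r) = (fun δ => act δ t)^[i₀] (v x) := by
    intro x i₀ hi₀ hx hminh
    rw [hdecomp x]
    rw [Stmt12Aux.v_sum_eq_min hinf hle hsub c.support
      (fun i => rsmul x (t ^ i * ι (c i))) hi₀ ?_ ?_, hmono x i₀ hi₀]
    · rw [hmono x i₀ hi₀]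
      exact Stmt12Aux.iter_ne_infty hV (Stmt12Aux.v_ne_infty hinf hx) i₀
    · intro i hi hne
      rw [hmono x i₀ hi₀, hmono x i hi]
      exact hminh i hi hne
  -- every nonzero annihilated element sits at a fixed point of θ
  have hfixed : ∀ x ∈ T, x ≠ 0 → act (v x) t = v x := by
    intro x hxT hx
    by_contra hne
    have hvx : v x ≠ infty := Stmt12Aux.v_ne_infty hinf hx
    have hiterne : ∀ n : ℕ, (fun δ => act δ t)^[n] (v x) ≠ infty :=
      Stmt12Aux.iter_ne_infty hV hvx
    rcases lt_or_gt_of_ne hne with hlt | hgt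
    · -- strictly decreasing orbit: all monomial valuations distinct, min at max index
      have hsucc : ∀ n : ℕ,
          (fun δ => act δ t)^[n + 1] (v x) < (fun δ => act δ t)^[n] (v x) := by
        intro n
        induction n with
        | zero => simpa using hlt
        | succ n ih =>
          have h2 := hV.act_t_strictMono ((fun δ => act δ t)^[n] (v x))
            ((fun δ => act δ t)^[n + 1] (v x)) (hiterne n) (hiterne (n + 1)) ih
          rw [← Function.iterate_succ_apply' (fun δ => act δ t) n (v x)] at h2
          rw [Function.iterate_succ_apply' (fun δ => act δ t) (n + 1) (v x)]
          exact h2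
      have hanti := strictAnti_nat_of_succ_lt
        (f := fun n => (fun δ => act δ t)^[n] (v x)) hsucc
      have := hvmin x (c.support.max' hsupp) (c.support.max'_mem hsupp) hx
        (fun i hi hne' =>
          hanti (lt_of_le_of_ne (Finset.le_max' _ i hi) hne'))
      rw [show rsmul x r = 0 from hxT, Stmt12Aux.v_zero hinf] at this
      exact hiterne _ this.symm
    · have hsucc : ∀ n : ℕ,
          (fun δ => act δ t)^[n] (v x) < (fun δ => act δ t)^[n + 1] (v x) := by
        intro n
        induction n with
        | zero => simpa using hgt
        | succ n ih =>
          have h2 := hV.act_t_strictMono ((fun δ => act δ t)^[n + 1] (v x))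
            ((fun δ => act δ t)^[n] (v x)) (hiterne (n + 1)) (hiterne n) ih
          rw [← Function.iterate_succ_apply' (fun δ => act δ t) n (v x)] at h2
          rw [Function.iterate_succ_apply' (fun δ => act δ t) (n + 1) (v x)]
          exact h2
      have hmonot := strictMono_nat_of_lt_succ
        (f := fun n => (fun δ => act δ t)^[n] (v x)) hsucc
      have := hvmin x (c.support.min' hsupp) (c.support.min'_mem hsupp) hx
        (fun i hi hne' =>
          hmonot (lt_of_le_of_ne (Finset.min'_le _ i hi) (Ne.symm hne')))
      rw [show rsmul x r = 0 from hxT, Stmt12Aux.v_zero hinf] at this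
      exact hiterne _ this.symm
  -- the C-relation invariance
  have hCrel : ∀ {a b c' a' b' c'' : M}, v (a - b) = v (a' - b') →
      v (a - c') = v (a' - c'') → v (b - c') = v (b' - c'') →
      (Crel v a b c' ↔ Crel v a' b' c'') := by
    intro a b c' a' b' c'' h1 h2 h3
    unfold Crel
    rw [h1, h2, h3]
  -- C-minimality applied to T
  letI instM : (cModLang R).Structure M := cModStructure R M (Crel v)
  have hTqfc := hcmin M (show (cModLang R).ElementarilyEquivalent M M from rfl) T
    (Stmt12Aux.definable_ann (Crel v) r)
  obtain ⟨k, ψ, cs, hψqf, hTset⟩ := hTqfc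
  have hTinv : ∀ a a' : M, (∀ i, v (a - cs i) = v (a' - cs i)) → (a ∈ T ↔ a' ∈ T) := by
    intro a a' h
    rw [show T = _ from hTset]
    exact Stmt12Aux.qf_inv _ (fun h1 h2 h3 => hCrel h1 h2 h3) hinf hle hsub hψqf cs h
  -- the base point x₀ and the fixed point μ
  obtain ⟨x₀, hx₀mem⟩ :=
    (hT.diff ((Set.finite_range cs).union (Set.finite_singleton 0))).nonempty
  have hx₀T : x₀ ∈ T := hx₀mem.1
  have hx₀ne : x₀ ≠ 0 := fun h =>
    hx₀mem.2 (Set.mem_union_right _ (by rw [h]; exact Set.mem_singleton 0))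
  have hx₀nr : x₀ ∉ Set.range cs := fun h => hx₀mem.2 (Set.mem_union_left _ h)
  set μ := v x₀ with hμdef
  have hμinf : μ ≠ infty := Stmt12Aux.v_ne_infty hinf hx₀ne
  have hμfix : act μ t = μ := hfixed x₀ hx₀T hx₀ne
  have hannval : ∀ x ∈ T, x ≠ 0 → v x = μ := fun x hx hxne =>
    Stmt12Aux.fix_unique hV (hfixed x hx hxne) (Stmt12Aux.v_ne_infty hinf hxne) hμfix hμinf
  by_cases habove : ∃ γ : Δ, μ < γ ∧ γ ≠ infty
  · -- CASE II : there are values above μ; derive a contradiction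
    obtain ⟨ν, hν, hνinf⟩ := habove
    have hnomax : ∀ α : Δ, α ≠ infty → ∃ δ : Δ, α < δ ∧ δ ≠ infty := by
      intro α hα
      rcases le_or_gt α μ with h | h
      · exact ⟨ν, lt_of_le_of_lt h hν, hνinf⟩
      · exact ⟨act α t, Stmt12Aux.theta_expand hV hμfix h hα, hV.act_t_ne_infty α hα⟩
    set F : Finset Δ := insert μ (Finset.image (fun i => v (x₀ - cs i)) Finset.univ)
      with hF
    have hFne : F.Nonempty := ⟨μ, Finset.mem_insert_self _ _⟩
    have hbinf : F.max' hFne ≠ infty := by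
      have hbF : F.max' hFne ∈ F := F.max'_mem hFne
      rcases Finset.mem_insert.1 hbF with h | h
      · rw [h]; exact hμinf
      · obtain ⟨i, -, hh⟩ := Finset.mem_image.1 h
        rw [← hh]
        exact Stmt12Aux.v_ne_infty hinf
          (sub_ne_zero.2 fun he => hx₀nr ⟨i, he.symm⟩)
    obtain ⟨δ', hδ'gt, hδ'inf⟩ := hnomax _ hbinf
    obtain ⟨wd, hwd⟩ := hV.v_surjective δ'
    have hwdne : wd ≠ 0 := fun h => hδ'inf (by rw [← hwd, h, Stmt12Aux.v_zero hinf])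
    have hΦ : ∀ i, v (x₀ - cs i) = v ((x₀ + wd) - cs i) := by
      intro i
      have h1 : v (x₀ - cs i) < v wd := by
        rw [hwd]
        exact lt_of_le_of_lt (F.le_max' _ (Finset.mem_insert_of_mem
          (Finset.mem_image_of_mem _ (Finset.mem_univ i)))) hδ'gt
      have h2 : x₀ + wd - cs i = (x₀ - cs i) + wd := by abel
      rw [h2, Stmt12Aux.v_add_eq hinf hle hsub h1]
    have hyT : (x₀ + wd) ∈ T := (hTinv x₀ (x₀ + wd) hΦ).1 hx₀T
    have hwdT : wd ∈ T := by
      have h3 := hTsub hyT hx₀T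
      rwa [add_sub_cancel_left] at h3
    have h4 := hannval wd hwdT hwdne
    rw [hwd] at h4
    rw [h4] at hδ'gt
    exact absurd hδ'gt (not_lt.2 (F.le_max' μ (Finset.mem_insert_self _ _)))
  · -- CASE I : μ is the largest value
    push_neg at habove
    have hmax : ∀ γ : Δ, μ < γ → γ = infty := habove
    set G : Set M := {z : M | μ ≤ v z} with hG
    have hx₀G : x₀ ∈ G := le_of_eq hμdef
    -- all points of G off the parameters have the same Φ-type as x₀, hence lie in T
    have hsame : ∀ z, z ∈ G → z ≠ 0 → z ∉ Set.range cs →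
        ∀ i, v (x₀ - cs i) = v (z - cs i) := by
      intro z hzG hzne hznr i
      rcases lt_or_ge (v (cs i)) μ with h | h
      · rw [Stmt12Aux.v_sub_eq_right hinf hle hsub (show v (cs i) < v x₀ from hμdef ▸ h),
          Stmt12Aux.v_sub_eq_right hinf hle hsub (lt_of_lt_of_le h hzG)]
      · have key : ∀ p : M, μ ≤ v p → p ≠ cs i → v (p - cs i) = μ := by
          intro p hp hpne
          have hge : μ ≤ v (p - cs i) := le_trans (le_min hp h) (hsub p (cs i))
          rcases eq_or_lt_of_le hge with he | hlt'
          · exact he.symm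
          · exact absurd (hmax _ hlt')
              (Stmt12Aux.v_ne_infty hinf (sub_ne_zero.2 hpne))
        rw [key x₀ hx₀G fun he => hx₀nr ⟨i, he.symm⟩,
          key z hzG fun he => hznr ⟨i, he.symm⟩]
    have hGsub : ∀ z, z ∈ G → z ∉ Set.range cs → z ∈ T := by
      intro z hzG hznr
      by_cases hz0 : z = 0
      · rw [hz0]; exact h0T
      · exact (hTinv x₀ z (hsame z hzG hz0 hznr)).1 hx₀T
    have hGT : G ⊆ T := by
      intro z hzG
      by_contra hzT
      have himg : (fun x => z + x) '' T ⊆ Set.range cs := by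
        rintro _ ⟨xx, hxT, rfl⟩
        have hzxG : z + xx ∈ G := by
          have hx' : μ ≤ v xx := by
            by_cases hx0 : xx = 0
            · rw [hx0, Stmt12Aux.v_zero hinf]; exact hle μ
            · exact le_of_eq (hannval xx hxT hx0).symm
          exact le_trans (le_min hzG hx') (Stmt12Aux.v_add_ge hinf hle hsub z xx)
        by_contra hnr
        have h1 : z + xx ∈ T := hGsub _ hzxG hnr
        have h2 := hTsub h1 hxT
        rw [add_sub_cancel_right] at h2
        exact hzT h2
      have hinj : Set.InjOn (fun x => z + x) T := fun a _ b _ h => by simpa using h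
      exact (hT.image hinj) (Set.Finite.subset (Set.finite_range cs) himg)
    -- the image set D
    set D : Set M := {z : M | ∃ y : M, rsmul y r = z} with hD
    have hDqfc := hcmin M (show (cModLang R).ElementarilyEquivalent M M from rfl) D
      (Stmt12Aux.definable_im (Crel v) r)
    obtain ⟨k', χ, ds, hχqf, hDset⟩ := hDqfc
    have hDinv : ∀ a a' : M, (∀ i, v (a - ds i) = v (a' - ds i)) →
        (a ∈ D ↔ a' ∈ D) := by
      intro a a' h
      rw [show D = _ from hDset]
      exact Stmt12Aux.qf_inv _ (fun h1 h2 h3 => hCrel h1 h2 h3) hinf hle hsub hχqf ds h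
    -- valuations of elements of D
    have hvr : ∀ y : M, v y < μ →
        v (rsmul y r) = (fun δ => act δ t)^[c.support.max' hsupp] (v y) := by
      intro y hy
      have hyne : y ≠ 0 := by
        intro h
        rw [h, Stmt12Aux.v_zero hinf] at hy
        exact absurd hy (not_lt.2 (hle μ))
      refine hvmin y _ (c.support.max'_mem hsupp) hyne ?_
      intro i hi hne
      exact Stmt12Aux.orbit_strictAnti hV hμfix hμinf hy
        (lt_of_le_of_ne (Finset.le_max' _ i hi) hne)
    have hDval : ∀ z ∈ D, z ≠ 0 → v z < μ := by
      rintro z ⟨y, rfl⟩ hzne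
      have hyv : v y < μ := by
        by_contra hge
        push_neg at hge
        exact hzne (hGT hge)
      rw [hvr y hyv]
      exact Stmt12Aux.orbit_stays_below hV hμfix hμinf hyv _
    have hx₀D : x₀ ∉ D := fun h =>
      absurd (hDval x₀ h hx₀ne) (by rw [← hμdef]; exact lt_irrefl μ)
    -- a nonzero element of valuation < μ, from non-triviality
    have hγex : ∃ w : M, w ≠ 0 ∧ v w < μ := by
      rw [TriviallyValued] at hnontriv
      push_neg at hnontriv
      obtain ⟨a1, a2, h1, h2, hne⟩ := hnontriv
      have hv1 : v a1 ≤ μ := by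
        by_contra h
        push_neg at h
        exact Stmt12Aux.v_ne_infty hinf h1 (hmax _ h)
      have hv2 : v a2 ≤ μ := by
        by_contra h
        push_neg at h
        exact Stmt12Aux.v_ne_infty hinf h2 (hmax _ h)
      rcases eq_or_lt_of_le hv1 with he1 | hl1
      · refine ⟨a2, h2, lt_of_le_of_ne hv2 fun hh => hne ?_⟩
        rw [he1, hh]
      · exact ⟨a1, h1, hl1⟩
    obtain ⟨w, hwne, hwlt⟩ := hγex
    -- the family e j of elements of D with strictly decreasing valuations < μ
    set e : ℕ → M := fun j => rsmul (rsmul w (t ^ j)) r with he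
    have hvtj_lt : ∀ j : ℕ, v (rsmul w (t ^ j)) < μ := by
      intro j
      rw [Stmt12Aux.v_rsmul_tpow hV]
      exact Stmt12Aux.orbit_stays_below hV hμfix hμinf hwlt j
    have hve : ∀ j : ℕ,
        v (e j) = (fun δ => act δ t)^[c.support.max' hsupp + j] (v w) := by
      intro j
      rw [he]
      show v (rsmul (rsmul w (t ^ j)) r) = _
      rw [hvr _ (hvtj_lt j), Stmt12Aux.v_rsmul_tpow hV, ← Function.iterate_add_apply]
    have hvelt : ∀ j : ℕ, v (e j) < μ := by
      intro j
      rw [hve]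
      exact Stmt12Aux.orbit_stays_below hV hμfix hμinf hwlt _
    have heD : ∀ j : ℕ, e j ∈ D := fun j => ⟨rsmul w (t ^ j), rfl⟩
    have hestrict : ∀ j1 j2 : ℕ, j1 < j2 → v (e j2) < v (e j1) := by
      intro j1 j2 h
      rw [hve, hve]
      exact Stmt12Aux.orbit_strictAnti hV hμfix hμinf hwlt (by omega)
    -- each e j must be μ-close to some parameter
    have hneed : ∀ j : ℕ, ∃ i : Fin k', μ ≤ v (e j - ds i) := by
      intro j
      have hxjD : x₀ + e j ∉ D := by
        rintro ⟨y', hy'⟩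
        refine hx₀D ⟨y' - rsmul w (t ^ j), ?_⟩
        rw [Stmt12Aux.rsmul_sub, hy']
        show x₀ + e j - e j = x₀
        abel
      have hdiffer : ¬ ∀ i, v (e j - ds i) = v ((x₀ + e j) - ds i) := by
        intro hall
        exact hxjD ((hDinv (e j) (x₀ + e j) hall).1 (heD j))
      push_neg at hdiffer
      obtain ⟨i, hi⟩ := hdiffer
      refine ⟨i, ?_⟩
      by_contra hlt'
      push_neg at hlt'
      refine hi ?_
      have h2 : (x₀ + e j) - ds i = (e j - ds i) + x₀ := by abel
      rw [h2, Stmt12Aux.v_add_eq hinf hle hsub (by rw [hμdef] at hlt'; exact hlt')]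
    -- pigeonhole
    obtain ⟨j1, j2, hjne, hjeq⟩ := Fintype.exists_ne_map_eq_of_card_lt
      (fun j : Fin (k' + 1) => Classical.choose (hneed (j : ℕ)))
      (by simp)
    have hi1 := Classical.choose_spec (hneed (j1 : ℕ))
    have hi2 := Classical.choose_spec (hneed (j2 : ℕ))
    rw [hjeq] at hi1
    have hgeμ : μ ≤ v (e (j1 : ℕ) - e (j2 : ℕ)) := by
      have h3 : e (j1 : ℕ) - e (j2 : ℕ) =
          (e (j1 : ℕ) - ds (Classical.choose (hneed (j2 : ℕ)))) -
            (e (j2 : ℕ) - ds (Classical.choose (hneed (j2 : ℕ)))) := by abel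
      rw [h3]
      exact le_trans (le_min hi1 hi2) (hsub _ _)
    have hvalne : (j1 : ℕ) ≠ (j2 : ℕ) := fun h => hjne (Fin.ext h)
    have hltμ : v (e (j1 : ℕ) - e (j2 : ℕ)) < μ := by
      rcases lt_or_gt_of_ne hvalne with h | h
      · rw [Stmt12Aux.v_sub_eq_right hinf hle hsub (hestrict _ _ h)]
        exact hvelt _
      · rw [Stmt12Aux.v_sub_eq_left hinf hle hsub (hestrict _ _ h)]
        exact hvelt _
    exact absurd hltμ (not_lt.2 hgeμ)
end
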